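/- arXiv:math/0508112 — 5 statements merged into one kernel-verified Lean document; each statement's English description precedes it below -/
import Mathlib

section
/- For n ≥ 1, the number of permutations of {1,...,n} with d descents ending in k equals the number with d descents beginning with n+1-k. -/
open Finset

/-- Number of descents of a permutation of `Fin n` (positions `i` with `π(i) > π(i+1)`). -/
def descents (n : ℕ) (π : Equiv.Perm (Fin n)) : ℕ :=
  (Finset.univ.filter (fun i : Fin n =>
    ∃ j : Fin n, (j : ℕ) = (i : ℕ) + 1 ∧ π j < π i)).card

/-- `A n d k` : number of permutations of `{1,…,n}` with exactly `d` descents and first value `k`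
(1-based values; `d : ℤ`, so `A n d k = 0` when `d < 0`). -/
def A (n : ℕ) (d : ℤ) (k : ℕ) : ℕ :=
  (Finset.univ.filter (fun π : Equiv.Perm (Fin n) =>
    (descents n π : ℤ) = d ∧ ∃ i : Fin n, (i : ℕ) = 0 ∧ (π i : ℕ) + 1 = k)).card

/-- `Alast n d k` : number with `d` descents and last value `k`. -/
def Alast (n : ℕ) (d : ℤ) (k : ℕ) : ℕ :=
  (Finset.univ.filter (fun π : Equiv.Perm (Fin n) =>
    (descents n π : ℤ) = d ∧ ∃ i : Fin n, (i : ℕ) + 1 = n ∧ (π i : ℕ) + 1 = k)).card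

/-- Eulerian number: permutations of `{1,…,n}` with `d` descents. -/
def Eul (n : ℕ) (d : ℤ) : ℕ :=
  (Finset.univ.filter (fun π : Equiv.Perm (Fin n) => (descents n π : ℤ) = d)).card

lemma conj_apply (n : ℕ) (π : Equiv.Perm (Fin n)) (i : Fin n) :
    (Fin.revPerm * π * Fin.revPerm : Equiv.Perm (Fin n)) i = (π i.rev).rev := by
  simp [Equiv.Perm.mul_apply]

lemma mem_aux {n : ℕ} {π : Equiv.Perm (Fin n)} {i : Fin n}
    (hi : i ∈ Finset.univ.filter (fun i : Fin n =>
      ∃ j : Fin n, (j : ℕ) = (i : ℕ) + 1 ∧ π j < π i)) : (i : ℕ) + 1 < n := by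
  simp only [Finset.mem_filter] at hi
  obtain ⟨-, j, hj, -⟩ := hi
  exact hj ▸ j.isLt

lemma descents_conj (n : ℕ) (π : Equiv.Perm (Fin n)) :
    descents n (Fin.revPerm * π * Fin.revPerm) = descents n π := by
  unfold descents
  refine Finset.card_bij' (fun i hi => Fin.rev ⟨(i:ℕ)+1, mem_aux hi⟩)
    (fun i hi => Fin.rev ⟨(i:ℕ)+1, mem_aux hi⟩) ?_ ?_ ?_ ?_
  · intro i hi
    have hb := mem_aux hi
    simp only [Finset.mem_filter, Finset.mem_univ, true_and] at hi ⊢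
    obtain ⟨j, hj, hlt⟩ := hi
    have hji : j = ⟨(i:ℕ)+1, hb⟩ := Fin.ext hj
    subst hji
    refine ⟨Fin.rev i, ?_, ?_⟩
    · simp [Fin.val_rev]; omega
    · simp only [conj_apply] at hlt
      rw [Fin.rev_lt_rev] at hlt
      simpa using hlt
  · intro i hi
    have hb := mem_aux hi
    simp only [Finset.mem_filter, Finset.mem_univ, true_and] at hi ⊢
    obtain ⟨j, hj, hlt⟩ := hi
    have hji : j = ⟨(i:ℕ)+1, hb⟩ := Fin.ext hj
    subst hji
    refine ⟨Fin.rev i, ?_, ?_⟩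
    · simp [Fin.val_rev]; omega
    · simp only [conj_apply, Fin.rev_lt_rev, Fin.rev_rev]
      simpa using hlt
  · intro i hi
    have hb := mem_aux hi
    apply Fin.ext
    simp [Fin.val_rev]
    omega
  · intro i hi
    have hb := mem_aux hi
    apply Fin.ext
    simp [Fin.val_rev]
    omega

theorem stmt2 (n : ℕ) (hn : 1 ≤ n) (d : ℤ) (k : ℕ) (hk1 : 1 ≤ k) (hkn : k ≤ n) :
    Alast n d k = A n d (n + 1 - k) := by
  unfold Alast A
  refine Finset.card_nbij' (fun π => Fin.revPerm * π * Fin.revPerm)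
    (fun π => Fin.revPerm * π * Fin.revPerm) ?_ ?_ ?_ ?_
  · intro π hπ
    simp only [Finset.mem_coe, Finset.mem_filter, Finset.mem_univ, true_and] at hπ ⊢
    obtain ⟨hd, i, hi, hk⟩ := hπ
    refine ⟨by rw [descents_conj]; exact hd, Fin.rev i, ?_, ?_⟩
    · simp [Fin.val_rev]; omega
    · rw [conj_apply, Fin.rev_rev]
      simp [Fin.val_rev]
      omega
  · intro π hπ
    simp only [Finset.mem_coe, Finset.mem_filter, Finset.mem_univ, true_and] at hπ ⊢
    obtain ⟨hd, i, hi, hk⟩ := hπ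
    refine ⟨by rw [descents_conj]; exact hd, Fin.rev i, ?_, ?_⟩
    · simp [Fin.val_rev]; omega
    · rw [conj_apply, Fin.rev_rev]
      have := (π i).isLt
      simp [Fin.val_rev]
      omega
  · intro π _
    ext x
    simp [Equiv.Perm.mul_apply]
  · intro π _
    ext x
    simp [Equiv.Perm.mul_apply]
end

section
/- For n > 1 and 1 ≤ k ≤ n-1, A(n,d,k) - A(n-1,d,k) = A(n,d,k+1) - A(n-1,d-1,k). -/
open Finset

namespace Stmt4Aux

variable {m : ℕ}

/-- Insert value `b` at the front of `σ` (values `≥ b` shifted up). -/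
def ins (b : Fin (m + 1)) (σ : Equiv.Perm (Fin m)) : Equiv.Perm (Fin (m + 1)) :=
  (finSuccEquiv m).trans (σ.optionCongr.trans (finSuccEquiv' b).symm)

@[simp] lemma ins_zero (b : Fin (m + 1)) (σ : Equiv.Perm (Fin m)) : ins b σ 0 = b := by
  simp [ins]

@[simp] lemma ins_succ (b : Fin (m + 1)) (σ : Equiv.Perm (Fin m)) (j : Fin m) :
    ins b σ j.succ = b.succAbove (σ j) := by
  simp [ins]

lemma ins_injective (b : Fin (m + 1)) : Function.Injective (ins b) := by
  intro σ τ h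
  ext j
  have h2 : ins b σ j.succ = ins b τ j.succ := by rw [h]
  rw [ins_succ, ins_succ] at h2
  exact congrArg Fin.val (Fin.succAbove_right_injective h2)

lemma ins_surj (b : Fin (m + 1)) (π : Equiv.Perm (Fin (m + 1))) (hb : π 0 = b) :
    ∃ σ : Equiv.Perm (Fin m), ins b σ = π := by
  set E : Option (Fin m) ≃ Option (Fin m) :=
    (finSuccEquiv m).symm.trans (π.trans (finSuccEquiv' b)) with hE
  have hnone : E none = none := by simp [hE, hb]
  refine ⟨Equiv.removeNone E, ?_⟩
  have hoc : (Equiv.removeNone E).optionCongr = E := by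
    apply Equiv.ext
    rintro (_ | a)
    · rw [Equiv.optionCongr_apply, Option.map_none]
      exact hnone.symm
    · have hex : ∃ x', E (some a) = some x' := by
        rcases h : E (some a) with _ | x'
        · exact absurd (E.injective (h.trans hnone.symm)) (by simp)
        · exact ⟨x', rfl⟩
      rw [Equiv.optionCongr_apply, Option.map_some]
      exact Equiv.removeNone_some E hex
  rw [ins, hoc, hE]
  ext i
  simp

/-- Descents of `ins b σ` : the descents of `σ` plus possibly one at position `0`. -/
lemma descents_ins (hm : 0 < m) (b : Fin (m + 1)) (σ : Equiv.Perm (Fin m)) :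
    descents (m + 1) (ins b σ) =
      (if b.succAbove (σ ⟨0, hm⟩) < b then 1 else 0) + descents m σ := by
  have key : ∀ j : Fin m,
      (∃ j' : Fin (m + 1), (j' : ℕ) = ((j.succ : Fin (m+1)) : ℕ) + 1 ∧
          ins b σ j' < ins b σ j.succ) ↔
      (∃ i' : Fin m, (i' : ℕ) = (j : ℕ) + 1 ∧ σ i' < σ j) := by
    intro j
    constructor
    · rintro ⟨j', hj', hlt⟩
      have hj2 : (j : ℕ) + 1 < m := by
        have := j'.isLt
        simp [Fin.val_succ] at hj'
        omega
      refine ⟨⟨(j : ℕ) + 1, hj2⟩, rfl, ?_⟩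
      have hjj : j' = (⟨(j : ℕ) + 1, hj2⟩ : Fin m).succ := by
        apply Fin.ext
        simp [hj']
      rw [hjj, ins_succ, ins_succ] at hlt
      exact Fin.succAbove_lt_succAbove_iff.mp hlt
    · rintro ⟨i', hi', hlt⟩
      refine ⟨i'.succ, by simp [hi'], ?_⟩
      rw [ins_succ, ins_succ]
      exact Fin.succAbove_lt_succAbove_iff.mpr hlt
  have h0 : (∃ j' : Fin (m + 1), (j' : ℕ) = ((0 : Fin (m+1)) : ℕ) + 1 ∧
      ins b σ j' < ins b σ 0) ↔ b.succAbove (σ ⟨0, hm⟩) < b := by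
    constructor
    · rintro ⟨j', hj', hlt⟩
      have hjj : j' = (⟨0, hm⟩ : Fin m).succ := by
        apply Fin.ext
        simpa using hj'
      rw [hjj, ins_succ, ins_zero] at hlt
      exact hlt
    · intro h
      exact ⟨(⟨0, hm⟩ : Fin m).succ, by simp, by rw [ins_succ, ins_zero]; exact h⟩
  unfold descents
  rw [Finset.card_filter, Finset.card_filter, Fin.sum_univ_succ]
  congr 1
  · simp only [h0]
  · refine Finset.sum_congr rfl (fun j _ => ?_)
    simp only [key j]

lemma swap_lt_iff {N : ℕ} {va va1 x y : Fin N} (hadj : (va : ℕ) + 1 = (va1 : ℕ))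
    (h1 : ¬(x = va ∧ y = va1)) (h2 : ¬(x = va1 ∧ y = va)) :
    (Equiv.swap va va1 x < Equiv.swap va va1 y ↔ x < y) := by
  have hswap : ∀ z : Fin N, ((Equiv.swap va va1 z : Fin N) : ℕ) =
      if (z : ℕ) = (va : ℕ) then (va1 : ℕ)
      else if (z : ℕ) = (va1 : ℕ) then (va : ℕ) else (z : ℕ) := by
    intro z
    by_cases h : z = va
    · subst h
      rw [Equiv.swap_apply_left]
      simp
    · by_cases h' : z = va1
      · rw [h', Equiv.swap_apply_right]
        have : (va1 : ℕ) ≠ (va : ℕ) := by omega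
        simp [this]
      · rw [Equiv.swap_apply_of_ne_of_ne h h']
        have hv : (z : ℕ) ≠ (va : ℕ) := fun hh => h (Fin.ext hh)
        have hv1 : (z : ℕ) ≠ (va1 : ℕ) := fun hh => h' (Fin.ext hh)
        simp [hv, hv1]
  simp only [Fin.ext_iff] at h1 h2
  rw [Fin.lt_def, Fin.lt_def, hswap x, hswap y]
  split_ifs <;> omega

lemma descents_swap (hm : 0 < m) (va va1 : Fin (m + 1)) (hadj : (va : ℕ) + 1 = (va1 : ℕ))
    (π : Equiv.Perm (Fin (m + 1)))
    (hc : (π ⟨0, Nat.succ_pos m⟩ = va ∧ π ⟨1, by omega⟩ ≠ va1) ∨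
          (π ⟨0, Nat.succ_pos m⟩ = va1 ∧ π ⟨1, by omega⟩ ≠ va)) :
    descents (m + 1) (Equiv.swap va va1 * π) = descents (m + 1) π := by
  unfold descents
  congr 1
  apply Finset.filter_congr
  intro i _
  simp only [Equiv.Perm.mul_apply]
  constructor
  · rintro ⟨j, hj, hlt⟩
    refine ⟨j, hj, ?_⟩
    rw [swap_lt_iff hadj ?_ ?_] at hlt
    · exact hlt
    · rintro ⟨hja, hia1⟩
      rcases hc with ⟨h0, h1⟩ | ⟨h0, h1⟩
      · have : j = ⟨0, Nat.succ_pos m⟩ := π.injective (hja.trans h0.symm)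
        rw [this] at hj
        simp at hj
      · have : i = ⟨0, Nat.succ_pos m⟩ := π.injective (hia1.trans h0.symm)
        rw [this] at hj
        have : j = (⟨1, by omega⟩ : Fin (m + 1)) := Fin.ext (by simpa using hj)
        exact h1 (this ▸ hja)
    · rintro ⟨hja1, hia⟩
      rcases hc with ⟨h0, h1⟩ | ⟨h0, h1⟩
      · have : i = ⟨0, Nat.succ_pos m⟩ := π.injective (hia.trans h0.symm)
        rw [this] at hj
        have : j = (⟨1, by omega⟩ : Fin (m + 1)) := Fin.ext (by simpa using hj)
        exact h1 (this ▸ hja1)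
      · have : j = ⟨0, Nat.succ_pos m⟩ := π.injective (hja1.trans h0.symm)
        rw [this] at hj
        simp at hj
  · rintro ⟨j, hj, hlt⟩
    refine ⟨j, hj, ?_⟩
    rw [swap_lt_iff hadj ?_ ?_]
    · exact hlt
    · rintro ⟨hja, hia1⟩
      rcases hc with ⟨h0, h1⟩ | ⟨h0, h1⟩
      · have : j = ⟨0, Nat.succ_pos m⟩ := π.injective (hja.trans h0.symm)
        rw [this] at hj
        simp at hj
      · have : i = ⟨0, Nat.succ_pos m⟩ := π.injective (hia1.trans h0.symm)
        rw [this] at hj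
        have : j = (⟨1, by omega⟩ : Fin (m + 1)) := Fin.ext (by simpa using hj)
        exact h1 (this ▸ hja)
    · rintro ⟨hja1, hia⟩
      rcases hc with ⟨h0, h1⟩ | ⟨h0, h1⟩
      · have : i = ⟨0, Nat.succ_pos m⟩ := π.injective (hia.trans h0.symm)
        rw [this] at hj
        have : j = (⟨1, by omega⟩ : Fin (m + 1)) := Fin.ext (by simpa using hj)
        exact h1 (this ▸ hja1)
      · have : j = ⟨0, Nat.succ_pos m⟩ := π.injective (hja1.trans h0.symm)
        rw [this] at hj
        simp at hj

lemma ins_bij_card (hm : 0 < m) (b : Fin (m + 1)) (c : Fin m) (v : Fin (m + 1))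
    (hv : b.succAbove c = v) (e d : ℤ)
    (hd : d = e + (if v < b then 1 else 0)) :
    (Finset.univ.filter (fun π : Equiv.Perm (Fin (m + 1)) =>
        ((descents (m + 1) π : ℤ) = d ∧ π ⟨0, Nat.succ_pos m⟩ = b) ∧
          π ⟨1, by omega⟩ = v)).card
      = (Finset.univ.filter (fun σ : Equiv.Perm (Fin m) =>
        (descents m σ : ℤ) = e ∧ σ ⟨0, hm⟩ = c)).card := by
  subst hv
  have hz0 : (⟨0, Nat.succ_pos m⟩ : Fin (m + 1)) = 0 := rfl
  have hz1 : (⟨1, by omega⟩ : Fin (m + 1)) = (⟨0, hm⟩ : Fin m).succ := rfl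
  symm
  apply Finset.card_bij (fun σ _ => ins b σ)
  · intro σ hσ
    simp only [Finset.mem_filter, Finset.mem_univ, true_and] at hσ ⊢
    obtain ⟨hde, hc0⟩ := hσ
    have h1 : ins b σ ⟨1, by omega⟩ = b.succAbove c := by
      rw [hz1, ins_succ, hc0]
    refine ⟨⟨?_, by rw [hz0, ins_zero]⟩, h1⟩
    rw [descents_ins hm b σ, hc0]
    push_cast
    omega
  · intro σ₁ h₁ σ₂ h₂ h
    exact ins_injective b h
  · intro π hπ
    simp only [Finset.mem_filter, Finset.mem_univ, true_and] at hπ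
    obtain ⟨⟨hde, h0⟩, h1⟩ := hπ
    obtain ⟨σ, hσ⟩ := ins_surj b π (by rw [← hz0]; exact h0)
    have hc0 : σ ⟨0, hm⟩ = c := by
      apply Fin.succAbove_right_injective (p := b)
      rw [← ins_succ b σ, ← hz1, hσ]
      exact h1
    refine ⟨σ, ?_, hσ⟩
    simp only [Finset.mem_filter, Finset.mem_univ, true_and]
    refine ⟨?_, hc0⟩
    have := descents_ins hm b σ
    rw [hσ, hc0] at this
    rw [this] at hde
    push_cast at hde
    omega

lemma swap_bij_card (hm : 0 < m) (va va1 : Fin (m + 1)) (hadj : (va : ℕ) + 1 = (va1 : ℕ))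
    (d : ℤ) :
    (Finset.univ.filter (fun π : Equiv.Perm (Fin (m + 1)) =>
        ((descents (m + 1) π : ℤ) = d ∧ π ⟨0, Nat.succ_pos m⟩ = va) ∧
          ¬ π ⟨1, by omega⟩ = va1)).card
  = (Finset.univ.filter (fun π : Equiv.Perm (Fin (m + 1)) =>
        ((descents (m + 1) π : ℤ) = d ∧ π ⟨0, Nat.succ_pos m⟩ = va1) ∧
          ¬ π ⟨1, by omega⟩ = va)).card := by
  have hne : va ≠ va1 := by
    intro h
    rw [h] at hadj
    omega
  have hz01 : (⟨0, Nat.succ_pos m⟩ : Fin (m + 1)) ≠ (⟨1, by omega⟩ : Fin (m + 1)) := by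
    intro h
    have := congrArg Fin.val h
    simp at this
  apply Finset.card_bij' (fun π _ => Equiv.swap va va1 * π) (fun π _ => Equiv.swap va va1 * π)
  · intro π hπ
    simp only [Finset.mem_filter, Finset.mem_univ, true_and] at hπ ⊢
    obtain ⟨⟨hde, h0⟩, h1⟩ := hπ
    have hz1ne : π ⟨1, by omega⟩ ≠ va := by
      intro h
      exact hz01 (π.injective (h0.trans h.symm))
    refine ⟨⟨?_, ?_⟩, ?_⟩
    · rw [descents_swap hm va va1 hadj π (Or.inl ⟨h0, h1⟩)]
      exact hde
    · rw [Equiv.Perm.mul_apply, h0, Equiv.swap_apply_left]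
    · rw [Equiv.Perm.mul_apply, Equiv.swap_apply_of_ne_of_ne hz1ne h1]
      exact hz1ne
  · intro π hπ
    simp only [Finset.mem_filter, Finset.mem_univ, true_and] at hπ ⊢
    obtain ⟨⟨hde, h0⟩, h1⟩ := hπ
    have hz1ne : π ⟨1, by omega⟩ ≠ va1 := by
      intro h
      exact hz01 (π.injective (h0.trans h.symm))
    refine ⟨⟨?_, ?_⟩, ?_⟩
    · rw [descents_swap hm va va1 hadj π (Or.inr ⟨h0, h1⟩)]
      exact hde
    · rw [Equiv.Perm.mul_apply, h0, Equiv.swap_apply_right]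
    · rw [Equiv.Perm.mul_apply, Equiv.swap_apply_of_ne_of_ne h1 hz1ne]
      exact hz1ne
  · intro π _
    ext x
    simp [Equiv.swap_apply_self]
  · intro π _
    ext x
    simp [Equiv.swap_apply_self]

lemma card_split {α : Type*} [Fintype α] (P Q : α → Prop) [DecidablePred P] [DecidablePred Q] :
    (Finset.univ.filter P).card
      = (Finset.univ.filter fun a => P a ∧ Q a).card
        + (Finset.univ.filter fun a => P a ∧ ¬ Q a).card := by
  rw [← Finset.card_filter_add_card_filter_not
    (s := Finset.univ.filter P) (p := Q), Finset.filter_filter, Finset.filter_filter]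

lemma A_eq_card {N : ℕ} (hN : 0 < N) (d : ℤ) (v : Fin N) :
    A N d ((v : ℕ) + 1) = (Finset.univ.filter (fun π : Equiv.Perm (Fin N) =>
      (descents N π : ℤ) = d ∧ π ⟨0, hN⟩ = v)).card := by
  unfold A
  congr 1
  apply Finset.filter_congr
  intro π _
  apply and_congr_right'
  constructor
  · rintro ⟨i, hi, hv⟩
    have hi0 : i = ⟨0, hN⟩ := Fin.ext hi
    rw [hi0] at hv
    exact Fin.ext (by omega)
  · intro h
    exact ⟨⟨0, hN⟩, rfl, by rw [h]⟩

end Stmt4Aux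

set_option maxHeartbeats 2000000 in
open Stmt4Aux in
theorem stmt4 (n : ℕ) (hn : 1 < n) (d : ℤ) (k : ℕ) (hk1 : 1 ≤ k) (hkn : k ≤ n - 1) :
    (A n d k : ℤ) - A (n - 1) d k = (A n d (k + 1) : ℤ) - A (n - 1) (d - 1) k := by
  obtain ⟨m, rfl⟩ : ∃ m, n = m + 1 := ⟨n - 1, by omega⟩
  have hm : 0 < m := by omega
  obtain ⟨a, rfl⟩ : ∃ a, k = a + 1 := ⟨k - 1, by omega⟩
  have ham : a + 1 ≤ m := by omega
  have hm1 : m + 1 - 1 = m := rfl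
  rw [hm1]
  set va : Fin (m + 1) := ⟨a, by omega⟩ with hva
  set va1 : Fin (m + 1) := ⟨a + 1, by omega⟩ with hva1
  set wa : Fin m := ⟨a, by omega⟩ with hwa
  have hadj : (va : ℕ) + 1 = (va1 : ℕ) := rfl
  -- succAbove computations
  have hsa : va.succAbove wa = va1 := by
    rw [Fin.succAbove_of_le_castSucc]
    · apply Fin.ext
      simp [hva1, hwa]
    · simp [Fin.le_def, hva, hwa]
  have hsa1 : va1.succAbove wa = va := by
    rw [Fin.succAbove_of_castSucc_lt]
    · apply Fin.ext
      simp [hva, hwa]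
    · simp [Fin.lt_def, hva1, hwa]
  -- rewrite the four A's as cards of filters
  have hA1 : A (m + 1) d (a + 1) = (Finset.univ.filter
      (fun π : Equiv.Perm (Fin (m + 1)) =>
        (descents (m + 1) π : ℤ) = d ∧ π ⟨0, Nat.succ_pos m⟩ = va)).card :=
    A_eq_card (Nat.succ_pos m) d va
  have hA2 : A (m + 1) d (a + 1 + 1) = (Finset.univ.filter
      (fun π : Equiv.Perm (Fin (m + 1)) =>
        (descents (m + 1) π : ℤ) = d ∧ π ⟨0, Nat.succ_pos m⟩ = va1)).card :=
    A_eq_card (Nat.succ_pos m) d va1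
  have hA3 : A m d (a + 1) = (Finset.univ.filter
      (fun σ : Equiv.Perm (Fin m) =>
        (descents m σ : ℤ) = d ∧ σ ⟨0, hm⟩ = wa)).card :=
    A_eq_card hm d wa
  have hA4 : A m (d - 1) (a + 1) = (Finset.univ.filter
      (fun σ : Equiv.Perm (Fin m) =>
        (descents m σ : ℤ) = d - 1 ∧ σ ⟨0, hm⟩ = wa)).card :=
    A_eq_card hm (d - 1) wa
  -- split A (m+1) d (a+1) by the value at position 1
  have split1 := card_split
      (fun π : Equiv.Perm (Fin (m + 1)) =>
        (descents (m + 1) π : ℤ) = d ∧ π ⟨0, Nat.succ_pos m⟩ = va)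
      (fun π => π ⟨1, by omega⟩ = va1)
  have split2 := card_split
      (fun π : Equiv.Perm (Fin (m + 1)) =>
        (descents (m + 1) π : ℤ) = d ∧ π ⟨0, Nat.succ_pos m⟩ = va1)
      (fun π => π ⟨1, by omega⟩ = va)
  have hlt1 : ¬ (va1 < va) := by
    simp [Fin.lt_def, hva, hva1]
  have hlt2 : va < va1 := by
    simp [Fin.lt_def, hva, hva1]
  have hins1 := ins_bij_card hm va wa va1 hsa d d (by rw [if_neg hlt1, add_zero])
  have hins2 := ins_bij_card hm va1 wa va hsa1 (d - 1) d (by rw [if_pos hlt2]; ring)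
  have hswap := swap_bij_card hm va va1 hadj d
  rw [← hA3] at hins1
  rw [← hA4] at hins2
  omega
end

section
/- For n > 1 and 1 ≤ k ≤ n-1, A(n,d,k) = (n-d-1)·A(n-1,d-1,k) + (d+1)·A(n-1,d,k). -/
open Finset

def toFun (n : ℕ) (π : Equiv.Perm (Fin n)) : ℕ → ℕ := fun i =>
  if h : i < n then (π ⟨i, h⟩ : ℕ) else 0

def Dcard (n : ℕ) (f : ℕ → ℕ) : ℕ :=
  ((Finset.range (n-1)).filter (fun i => f (i+1) < f i)).card

-- the insertion function
def gfun (m : ℕ) (σ : Equiv.Perm (Fin (m+1))) (p : Fin (m+1)) : Fin (m+2) → Fin (m+2) :=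
  fun i =>
    if h : (i : ℕ) ≤ (p : ℕ) then (σ ⟨i, by have := p.isLt; omega⟩).castSucc
    else if h2 : (i : ℕ) = (p : ℕ) + 1 then Fin.last (m+1)
    else (σ ⟨(i:ℕ) - 1, by have := i.isLt; omega⟩).castSucc

lemma gfun_inj (m : ℕ) (σ : Equiv.Perm (Fin (m+1))) (p : Fin (m+1)) :
    Function.Injective (gfun m σ p) := by
  intro a b h
  have ha := a.isLt; have hb := b.isLt
  unfold gfun at h
  split_ifs at h with h1 h2 h3 h4 h5 h6 <;>
  first
  | (apply Fin.ext;
     have := σ.injective (Fin.castSucc_injective _ h)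
     simp only [Fin.mk.injEq] at this
     omega)
  | exact absurd h (Fin.castSucc_lt_last _).ne
  | exact absurd h.symm (Fin.castSucc_lt_last _).ne
  | (apply Fin.ext; omega)

noncomputable def Phi (m : ℕ) (σ : Equiv.Perm (Fin (m+1))) (p : Fin (m+1)) :
    Equiv.Perm (Fin (m+2)) :=
  Equiv.ofBijective _ (Finite.injective_iff_bijective.mp (gfun_inj m σ p))

lemma Phi_apply (m σ p i) : Phi m σ p i = gfun m σ p i := rfl

section
variable (m : ℕ) (σ : Equiv.Perm (Fin (m+1))) (p : Fin (m+1))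

lemma toFun_Phi_le {i : ℕ} (h : i ≤ (p : ℕ)) :
    toFun (m+2) (Phi m σ p) i = toFun (m+1) σ i := by
  have hi : i < m + 2 := by have := p.isLt; omega
  have hi' : i < m + 1 := by have := p.isLt; omega
  simp only [toFun, dif_pos hi, dif_pos hi', Phi_apply, gfun]
  rw [dif_pos (by simpa using h)]
  simp

lemma toFun_Phi_mid : toFun (m+2) (Phi m σ p) ((p:ℕ)+1) = m + 1 := by
  have hi : (p:ℕ) + 1 < m + 2 := by have := p.isLt; omega
  simp only [toFun, dif_pos hi, Phi_apply, gfun]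
  split_ifs with h1
  · exfalso; omega
  · simp [Fin.last]

lemma toFun_Phi_gt {i : ℕ} (h : (p:ℕ)+1 < i) (h2 : i < m+2) :
    toFun (m+2) (Phi m σ p) i = toFun (m+1) σ (i-1) := by
  have hi' : i - 1 < m + 1 := by omega
  simp only [toFun, dif_pos h2, dif_pos hi', Phi_apply, gfun]
  split_ifs with ha hb
  · exfalso; omega
  · exfalso; omega
  · simp

end

def indF (m : ℕ) (Q : ℕ → ℕ) (p : ℕ) : ℕ := if p < m ∧ Q p < Q (p+1) then 1 else 0

lemma toFun_lt (n : ℕ) (π : Equiv.Perm (Fin n)) {i : ℕ} (h : i < n) :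
    toFun n π i < n := by
  simp only [toFun, dif_pos h]; exact (π ⟨i, h⟩).isLt

lemma toFun_inj (n : ℕ) (π : Equiv.Perm (Fin n)) {i j : ℕ} (hi : i < n) (hj : j < n)
    (h : toFun n π i = toFun n π j) : i = j := by
  simp only [toFun, dif_pos hi, dif_pos hj] at h
  exact congrArg Fin.val (π.injective (Fin.ext h))


lemma Dcard_split (m pv : ℕ) (P Q : ℕ → ℕ) (hpm : pv ≤ m)
    (hQle : ∀ i, i ≤ m → Q i ≤ m)
    (hQne : ∀ i, i < m → Q i ≠ Q (i+1))
    (hle : ∀ i, i ≤ pv → P i = Q i)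
    (hmid : P (pv+1) = m+1)
    (hgt : ∀ i, pv+1 < i → i < m+2 → P i = Q (i-1)) :
    Dcard (m+2) P = Dcard (m+1) Q + indF m Q pv := by
  classical
  have hsplit : Finset.range (m+1) = Finset.range (pv+1) ∪ Finset.Ico (pv+1) (m+1) := by
    rw [Finset.range_eq_Ico, Finset.range_eq_Ico]
    exact (Finset.Ico_union_Ico_eq_Ico (a := 0) (b := pv+1) (c := m+1) (by omega) (by omega)).symm
  have hdisj : Disjoint (Finset.range (pv+1)) (Finset.Ico (pv+1) (m+1)) := by
    rw [Finset.range_eq_Ico]; exact Finset.Ico_disjoint_Ico_consecutive 0 (pv+1) (m+1)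
  have hsplit2 : Finset.range m = Finset.range pv ∪ Finset.Ico pv m := by
    rw [Finset.range_eq_Ico, Finset.range_eq_Ico]
    exact (Finset.Ico_union_Ico_eq_Ico (a := 0) (b := pv) (c := m) (by omega) (by omega)).symm
  have hdisj2 : Disjoint (Finset.range pv) (Finset.Ico pv m) := by
    rw [Finset.range_eq_Ico]; exact Finset.Ico_disjoint_Ico_consecutive 0 pv m
  have stepA : Dcard (m+2) P =
      ((Finset.range (pv+1)).filter (fun i => P (i+1) < P i)).card
      + ((Finset.Ico (pv+1) (m+1)).filter (fun i => P (i+1) < P i)).card := by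
    unfold Dcard
    rw [show m + 2 - 1 = m + 1 from rfl, hsplit, Finset.filter_union,
      Finset.card_union_of_disjoint (Finset.disjoint_filter_filter hdisj)]
  have stepB : (Finset.range (pv+1)).filter (fun i => P (i+1) < P i)
      = (Finset.range pv).filter (fun i => Q (i+1) < Q i) := by
    ext i
    simp only [Finset.mem_filter, Finset.mem_range]
    constructor
    · rintro ⟨hi, hc⟩
      rcases Nat.lt_or_ge i pv with hip | hip
      · refine ⟨hip, ?_⟩
        rwa [hle _ (by omega), hle _ (by omega)] at hc
      · exfalso
        have hieq : i = pv := by omega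
        rw [hieq, hmid, hle _ (le_refl _)] at hc
        have := hQle pv hpm
        omega
    · rintro ⟨hi, hc⟩
      exact ⟨by omega, by rwa [hle _ (by omega), hle _ (by omega)]⟩
  have stepC : ((Finset.Ico (pv+1) (m+1)).filter (fun i => P (i+1) < P i)).card
      = ((Finset.Ico pv m).filter (fun j => j = pv ∨ Q (j+1) < Q j)).card := by
    symm
    refine Finset.card_bij (fun j _ => j + 1) ?_ ?_ ?_
    · intro j hj
      simp only [Finset.mem_filter, Finset.mem_Ico] at hj ⊢
      obtain ⟨⟨hj1, hj2⟩, hj3⟩ := hj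
      refine ⟨⟨by omega, by omega⟩, ?_⟩
      rcases eq_or_ne j pv with heq | hne
      · rw [heq, hmid, hgt (pv+1+1) (by omega) (by omega)]
        have : pv + 1 + 1 - 1 = pv + 1 := by omega
        rw [this]
        have := hQle (pv+1) (by omega)
        omega
      · have hjpv : pv < j := by omega
        have hc : Q (j+1) < Q j := hj3.resolve_left hne
        rw [hgt (j+1) (by omega) (by omega), hgt (j+1+1) (by omega) (by omega)]
        have e1 : j + 1 - 1 = j := by omega
        have e2 : j + 1 + 1 - 1 = j + 1 := by omega
        rw [e1, e2]
        exact hc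
    · intro a _ b _ h
      simpa using h
    · intro i hi
      simp only [Finset.mem_filter, Finset.mem_Ico] at hi
      obtain ⟨⟨hi1, hi2⟩, hc⟩ := hi
      refine ⟨i - 1, ?_, by omega⟩
      simp only [Finset.mem_filter, Finset.mem_Ico]
      refine ⟨⟨by omega, by omega⟩, ?_⟩
      rcases Nat.eq_or_lt_of_le hi1 with heq | hlt
      · left; omega
      · right
        rw [hgt i (by omega) (by omega), hgt (i+1) (by omega) (by omega)] at hc
        have e1 : i + 1 - 1 = (i - 1) + 1 := by omega
        rwa [e1] at hc
  have stepD : ((Finset.Ico pv m).filter (fun j => j = pv ∨ Q (j+1) < Q j)).card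
      = ((Finset.Ico pv m).filter (fun j => Q (j+1) < Q j)).card + indF m Q pv := by
    rcases Nat.lt_or_ge pv m with hpm' | hpm'
    · rcases Nat.lt_or_ge (Q (pv+1)) (Q pv) with hc | hc
      · have : indF m Q pv = 0 := by
          unfold indF
          rw [if_neg]
          rintro ⟨-, h2⟩; omega
        rw [this, Nat.add_zero]
        congr 1
        apply Finset.filter_congr
        intro j hj
        simp only [Finset.mem_Ico] at hj
        constructor
        · rintro (rfl | h)
          · simpa using hc
          · simpa using h
        · intro h; right; simpa using h
      · have hne : Q pv ≠ Q (pv+1) := hQne pv hpm'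
        have hcc : Q pv < Q (pv+1) := by omega
        have : indF m Q pv = 1 := by
          unfold indF
          rw [if_pos ⟨hpm', hcc⟩]
        rw [this]
        have hset : (Finset.Ico pv m).filter (fun j => j = pv ∨ Q (j+1) < Q j)
            = insert pv ((Finset.Ico pv m).filter (fun j => Q (j+1) < Q j)) := by
          ext j
          simp only [Finset.mem_insert, Finset.mem_filter, Finset.mem_Ico]
          constructor
          · rintro ⟨hj, rfl | h⟩
            · left; rfl
            · right; exact ⟨hj, h⟩
          · rintro (rfl | ⟨hj, h⟩)
            · exact ⟨⟨le_refl _, hpm'⟩, Or.inl rfl⟩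
            · exact ⟨hj, Or.inr h⟩
        rw [hset, Finset.card_insert_of_notMem]
        simp only [Finset.mem_filter, Finset.mem_Ico]
        rintro ⟨-, h⟩
        omega
    · have h1 : Finset.Ico pv m = ∅ := by
        rw [Finset.Ico_eq_empty_iff]; omega
      have h2 : indF m Q pv = 0 := by
        unfold indF; rw [if_neg]; rintro ⟨h, -⟩; omega
      rw [h1, h2]
      simp
  have stepE : Dcard (m+1) Q =
      ((Finset.range pv).filter (fun i => Q (i+1) < Q i)).card
      + ((Finset.Ico pv m).filter (fun i => Q (i+1) < Q i)).card := by
    unfold Dcard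
    rw [show m + 1 - 1 = m from rfl, hsplit2, Finset.filter_union,
      Finset.card_union_of_disjoint (Finset.disjoint_filter_filter hdisj2)]
  rw [stepA, stepB, stepC, stepD, stepE]
  ring

lemma Dcard_Phi (m : ℕ) (σ : Equiv.Perm (Fin (m+1))) (p : Fin (m+1)) :
    Dcard (m+2) (toFun (m+2) (Phi m σ p))
      = Dcard (m+1) (toFun (m+1) σ) + indF m (toFun (m+1) σ) (p : ℕ) := by
  have hpm : (p:ℕ) ≤ m := by have := p.isLt; omega
  refine Dcard_split m (p:ℕ) _ _ hpm ?_ ?_ ?_ ?_ ?_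
  · intro i hi
    have := toFun_lt (m+1) σ (show i < m+1 by omega); omega
  · intro i hi h
    have := toFun_inj (m+1) σ (show i < m+1 by omega) (show i+1 < m+1 by omega) h
    omega
  · intro i hi; exact toFun_Phi_le m σ p hi
  · exact toFun_Phi_mid m σ p
  · intro i h1 h2; exact toFun_Phi_gt m σ p h1 h2

lemma pi_val_lt (m : ℕ) (π : Equiv.Perm (Fin (m+2))) (j : Fin (m+2))
    (h : j ≠ π.symm (Fin.last (m+1))) : (π j : ℕ) < m + 1 := by
  have hne : π j ≠ Fin.last (m+1) := by
    intro he
    exact h (by rw [← he]; simp)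
  have h2 := (π j).isLt
  have h3 : (π j : ℕ) ≠ m + 1 := fun hv => hne (Fin.ext (by simp [Fin.last, hv]))
  omega

def qval (m : ℕ) (π : Equiv.Perm (Fin (m+2))) : ℕ := (π.symm (Fin.last (m+1)) : ℕ)

def sfun (m : ℕ) (π : Equiv.Perm (Fin (m+2))) (i : Fin (m+1)) : Fin (m+1) :=
  if h : (i:ℕ) < qval m π
  then ⟨(π ⟨i, by have := i.isLt; omega⟩ : ℕ),
    pi_val_lt m π _ (fun he => by
      have : (i : ℕ) = qval m π := congrArg Fin.val he
      omega)⟩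
  else ⟨(π ⟨(i:ℕ)+1, by have := i.isLt; omega⟩ : ℕ),
    pi_val_lt m π _ (fun he => by
      have h2 : (i : ℕ) + 1 = qval m π := congrArg Fin.val he
      omega)⟩

lemma sfun_inj (m : ℕ) (π : Equiv.Perm (Fin (m+2))) : Function.Injective (sfun m π) := by
  intro a b h
  unfold sfun at h
  split_ifs at h with h1 h2 h3 <;>
  · apply Fin.ext
    have h' : _ = _ := Fin.mk.injEq .. ▸ h
    simp only [Fin.mk.injEq] at h
    have := π.injective (Fin.ext h)
    simp only [Fin.mk.injEq] at this
    omega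

noncomputable def Psi (m : ℕ) (π : Equiv.Perm (Fin (m+2))) : Equiv.Perm (Fin (m+1)) :=
  Equiv.ofBijective _ (Finite.injective_iff_bijective.mp (sfun_inj m π))

lemma Psi_apply (m π i) : Psi m π i = sfun m π i := rfl

def psiP (m : ℕ) (π : Equiv.Perm (Fin (m+2))) : Fin (m+1) :=
  ⟨qval m π - 1, by have : qval m π < m + 2 := (π.symm _).isLt; omega⟩

-- q-value of Phi
lemma qval_Phi (m : ℕ) (σ : Equiv.Perm (Fin (m+1))) (p : Fin (m+1)) :
    qval m (Phi m σ p) = (p : ℕ) + 1 := by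
  unfold qval
  have : Phi m σ p ⟨(p:ℕ)+1, by have := p.isLt; omega⟩ = Fin.last (m+1) := by
    rw [Phi_apply]
    unfold gfun
    rw [dif_neg (by simp), dif_pos (by simp)]
  rw [← this, Equiv.symm_apply_apply]

lemma psi_Phi (m : ℕ) (σ : Equiv.Perm (Fin (m+1))) (p : Fin (m+1)) :
    Psi m (Phi m σ p) = σ ∧ psiP m (Phi m σ p) = p := by
  have hq := qval_Phi m σ p
  constructor
  · apply Equiv.ext
    intro i
    apply Fin.ext
    rw [Psi_apply]
    unfold sfun
    split_ifs with h
    · rw [hq] at h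
      have hle : (i : ℕ) ≤ (p : ℕ) := by omega
      simp only
      rw [Phi_apply]
      unfold gfun
      rw [dif_pos (by simpa using hle)]
      simp
    · rw [hq] at h
      have hgt : (p : ℕ) + 1 < (i : ℕ) + 1 := by omega
      simp only
      rw [Phi_apply]
      unfold gfun
      rw [dif_neg (by simp; omega), dif_neg (by simp; omega)]
      simp
  · apply Fin.ext
    simp [psiP, hq]

lemma Phi_psi (m : ℕ) (π : Equiv.Perm (Fin (m+2))) (hπ : qval m π ≠ 0) :
    Phi m (Psi m π) (psiP m π) = π := by
  have hqlt : qval m π < m + 2 := (π.symm _).isLt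
  have hpv : (psiP m π : ℕ) = qval m π - 1 := rfl
  apply Equiv.ext
  intro i
  rw [Phi_apply]
  unfold gfun
  split_ifs with h1 h2
  · -- i ≤ p, i.e. i < qval
    rw [hpv] at h1
    have hi : (i:ℕ) < qval m π := by omega
    apply Fin.ext
    simp only [Fin.coe_castSucc]
    rw [Psi_apply]
    unfold sfun
    rw [dif_pos (by simpa using hi)]
  · -- i = p + 1 = qval position
    rw [hpv] at h2
    have : (i : ℕ) = qval m π := by omega
    have : i = π.symm (Fin.last (m+1)) := Fin.ext this
    rw [this, Equiv.apply_symm_apply]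
  · -- i > p+1
    rw [hpv] at h1 h2
    have hgt : qval m π < (i : ℕ) := by omega
    apply Fin.ext
    simp only [Fin.coe_castSucc]
    rw [Psi_apply]
    unfold sfun
    rw [dif_neg (by simp; omega)]
    simp only
    congr 2
    apply Fin.ext
    simp
    omega

lemma descents_eq (n : ℕ) (π : Equiv.Perm (Fin n)) :
    descents n π = Dcard n (toFun n π) := by
  classical
  unfold descents Dcard
  refine Finset.card_bij (fun (i : Fin n) _ => (i : ℕ)) ?_ ?_ ?_
  · rintro i hi
    simp only [mem_filter, mem_univ, true_and] at hi ⊢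
    obtain ⟨j, hj, hlt⟩ := hi
    have hjn : (i : ℕ) + 1 < n := hj ▸ j.isLt
    refine ⟨mem_range.mpr (by omega), ?_⟩
    have e1 : toFun n π ((i:ℕ)+1) = (π j : ℕ) := by
      simp only [toFun, dif_pos hjn]
      congr 1; exact congrArg π (Fin.ext hj.symm)
    have e2 : toFun n π (i:ℕ) = (π i : ℕ) := by simp [toFun, i.isLt]
    rw [e1, e2]
    exact hlt
  · intro a _ b _ h; exact Fin.ext h
  · rintro i hi
    simp only [mem_filter, mem_range] at hi
    obtain ⟨hilt, hlt⟩ := hi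
    have hin : i < n := by omega
    have hin1 : i + 1 < n := by omega
    refine ⟨⟨i, hin⟩, ?_, rfl⟩
    simp only [mem_filter, mem_univ, true_and]
    refine ⟨⟨i+1, hin1⟩, rfl, ?_⟩
    simpa only [toFun, dif_pos hin1, dif_pos hin, Fin.lt_iff_val_lt_val] using hlt

lemma Phi_zero (m : ℕ) (σ : Equiv.Perm (Fin (m+1))) (p : Fin (m+1)) :
    ((Phi m σ p) 0 : ℕ) = (σ 0 : ℕ) := by
  rw [Phi_apply]
  unfold gfun
  rw [dif_pos (by simp)]
  simp

lemma descents_Phi (m : ℕ) (σ : Equiv.Perm (Fin (m+1))) (p : Fin (m+1)) :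
    descents (m+2) (Phi m σ p) = descents (m+1) σ + indF m (toFun (m+1) σ) (p : ℕ) := by
  rw [descents_eq, descents_eq, Dcard_Phi]

lemma card_fin_filter (N : ℕ) (q : ℕ → Prop) [DecidablePred q] :
    (Finset.univ.filter (fun i : Fin N => q i.val)).card
      = ((Finset.range N).filter q).card := by
  refine Finset.card_bij (fun (i : Fin N) _ => (i : ℕ)) ?_ ?_ ?_
  · intro i hi
    simp only [mem_filter, mem_univ, true_and, mem_range] at hi ⊢
    exact ⟨i.isLt, hi⟩
  · intro a _ b _ h; exact Fin.ext h
  · intro i hi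
    simp only [mem_filter, mem_range] at hi
    exact ⟨⟨i, hi.1⟩, by simpa using hi.2, rfl⟩

lemma descents_le (m : ℕ) (σ : Equiv.Perm (Fin (m+1))) : descents (m+1) σ ≤ m := by
  rw [descents_eq]
  unfold Dcard
  calc _ ≤ (Finset.range (m+1-1)).card := Finset.card_filter_le _ _
  _ = m := by simp

lemma card_ind_one (m : ℕ) (σ : Equiv.Perm (Fin (m+1))) :
    (Finset.univ.filter (fun p : Fin (m+1) => indF m (toFun (m+1) σ) p.val = 1)).card
      = m - descents (m+1) σ := by
  classical
  have hcf := card_fin_filter (m+1) (fun p => indF m (toFun (m+1) σ) p = 1)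
  rw [hcf, descents_eq]
  have h1 : ((Finset.range (m+1)).filter (fun p => indF m (toFun (m+1) σ) p = 1))
      = (Finset.range m).filter (fun p => toFun (m+1) σ p < toFun (m+1) σ (p+1)) := by
    ext p
    simp only [mem_filter, mem_range]
    unfold indF
    constructor
    · rintro ⟨h, hc⟩
      by_cases hcond : p < m ∧ toFun (m+1) σ p < toFun (m+1) σ (p+1)
      · exact ⟨hcond.1, hcond.2⟩
      · rw [if_neg hcond] at hc; omega
    · rintro ⟨h, hc⟩
      exact ⟨by omega, by rw [if_pos ⟨h, hc⟩]⟩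
  rw [h1]
  have h2 : (Finset.range m).filter (fun p => toFun (m+1) σ p < toFun (m+1) σ (p+1))
      = (Finset.range m).filter (fun p => ¬ (toFun (m+1) σ (p+1) < toFun (m+1) σ p)) := by
    apply Finset.filter_congr
    intro p hp
    simp only [mem_range] at hp
    have hne : toFun (m+1) σ p ≠ toFun (m+1) σ (p+1) := fun h => by
      have := toFun_inj (m+1) σ (show p < m+1 by omega) (show p+1 < m+1 by omega) h
      omega
    constructor
    · intro h; omega
    · intro h; omega
  rw [h2]
  have h3 := Finset.card_filter_add_card_filter_not
    (s := Finset.range m) (p := fun p => toFun (m+1) σ (p+1) < toFun (m+1) σ p)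
  unfold Dcard
  simp only [Finset.card_range] at h3
  have : m + 1 - 1 = m := rfl
  rw [this]
  omega

lemma card_ind_zero (m : ℕ) (σ : Equiv.Perm (Fin (m+1))) :
    (Finset.univ.filter (fun p : Fin (m+1) => indF m (toFun (m+1) σ) p.val = 0)).card
      = descents (m+1) σ + 1 := by
  classical
  have h0 : (Finset.univ.filter (fun p : Fin (m+1) => indF m (toFun (m+1) σ) p.val = 0))
      = (Finset.univ.filter (fun p : Fin (m+1) => ¬ (indF m (toFun (m+1) σ) p.val = 1))) := by
    apply Finset.filter_congr
    intro p _
    unfold indF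
    split_ifs <;> simp
  have h3 := Finset.card_filter_add_card_filter_not
    (s := (Finset.univ : Finset (Fin (m+1))))
    (p := fun p => indF m (toFun (m+1) σ) p.val = 1)
  rw [card_ind_one] at h3
  have h4 := descents_le m σ
  simp only [Finset.card_univ, Fintype.card_fin] at h3
  rw [h0]
  omega

lemma indF_le (m : ℕ) (Q : ℕ → ℕ) (p : ℕ) : indF m Q p ≤ 1 := by
  unfold indF; split_ifs <;> omega

lemma A_eq (m : ℕ) (d : ℤ) (k : ℕ) [DecidablePred (fun π : Equiv.Perm (Fin (m+1)) =>
      (descents (m+1) π : ℤ) = d ∧ ((π 0 : ℕ) + 1 = k))] :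
    A (m+1) d k = (Finset.univ.filter (fun π : Equiv.Perm (Fin (m+1)) =>
      (descents (m+1) π : ℤ) = d ∧ ((π 0 : ℕ) + 1 = k))).card := by
  unfold A
  congr 1
  apply Finset.filter_congr
  intro π _
  apply and_congr_right
  intro _
  constructor
  · rintro ⟨i, hi, h⟩
    have : i = 0 := Fin.ext (by simpa using hi)
    rwa [this] at h
  · intro h
    exact ⟨0, rfl, h⟩

open Classical in
lemma A_eq2 (m : ℕ) (d : ℤ) (k : ℕ) :
    A (m+2) d k = (Finset.univ.filter (fun π : Equiv.Perm (Fin (m+2)) =>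
      (descents (m+2) π : ℤ) = d ∧ ((π 0 : ℕ) + 1 = k))).card := by
  unfold A
  congr 1
  apply Finset.filter_congr
  intro π _
  apply and_congr_right
  intro _
  constructor
  · rintro ⟨i, hi, h⟩
    have : i = 0 := Fin.ext (by simpa using hi)
    rwa [this] at h
  · intro h
    exact ⟨0, rfl, h⟩

open Classical in
lemma step1 (m : ℕ) (d : ℤ) (k : ℕ) (hk : k ≤ m + 1) :
    A (m+2) d k = (Finset.univ.filter (fun x : Equiv.Perm (Fin (m+1)) × Fin (m+1) =>
      ((descents (m+1) x.1 : ℤ) + (indF m (toFun (m+1) x.1) (x.2 : ℕ) : ℤ) = d)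
      ∧ ((x.1 0 : ℕ) + 1 = k))).card := by
  rw [A_eq2]
  have hq : ∀ π : Equiv.Perm (Fin (m+2)), ((π 0 : ℕ) + 1 = k) → qval m π ≠ 0 := by
    intro π hπ hq0
    have h0 : π.symm (Fin.last (m+1)) = 0 := Fin.ext (by simpa [qval] using hq0)
    have : π 0 = Fin.last (m+1) := by rw [← h0, Equiv.apply_symm_apply]
    rw [this] at hπ
    simp [Fin.last] at hπ
    omega
  refine Finset.card_bij' (fun π _ => (Psi m π, psiP m π)) (fun x _ => Phi m x.1 x.2)
    ?_ ?_ ?_ ?_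
  · intro π hπ
    simp only [Finset.mem_filter, Finset.mem_univ, true_and] at hπ ⊢
    obtain ⟨hd, hh⟩ := hπ
    have hrec := Phi_psi m π (hq π hh)
    have hdes := descents_Phi m (Psi m π) (psiP m π)
    rw [hrec] at hdes
    have hz := Phi_zero m (Psi m π) (psiP m π)
    rw [hrec] at hz
    constructor
    · rw [hdes] at hd
      push_cast at hd ⊢
      linarith
    · rw [← hz]
      exact hh
  · intro x hx
    simp only [Finset.mem_filter, Finset.mem_univ, true_and] at hx ⊢
    obtain ⟨hd, hh⟩ := hx
    constructor
    · rw [descents_Phi]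
      push_cast
      push_cast at hd
      linarith
    · rw [Phi_zero]
      exact hh
  · intro π hπ
    simp only [Finset.mem_filter, Finset.mem_univ, true_and] at hπ
    exact Phi_psi m π (hq π hπ.2)
  · intro x hx
    obtain ⟨h1, h2⟩ := psi_Phi m x.1 x.2
    exact Prod.ext h1 h2

open Classical in
lemma step2 (m : ℕ) (d : ℤ) (k : ℕ) :
    ((Finset.univ.filter (fun x : Equiv.Perm (Fin (m+1)) × Fin (m+1) =>
      ((descents (m+1) x.1 : ℤ) + (indF m (toFun (m+1) x.1) (x.2 : ℕ) : ℤ) = d)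
      ∧ ((x.1 0 : ℕ) + 1 = k))).card : ℤ)
    = (d+1) * A (m+1) d k + ((m:ℤ) + 1 - d) * A (m+1) (d-1) k := by
  rw [Finset.card_eq_sum_card_fiberwise
    (f := Prod.fst) (t := Finset.univ) (fun x _ => Finset.mem_univ _)]
  have hfib : ∀ σ : Equiv.Perm (Fin (m+1)),
      ((Finset.univ.filter (fun x : Equiv.Perm (Fin (m+1)) × Fin (m+1) =>
        ((descents (m+1) x.1 : ℤ) + (indF m (toFun (m+1) x.1) (x.2 : ℕ) : ℤ) = d)
        ∧ ((x.1 0 : ℕ) + 1 = k))).filter (fun x => x.1 = σ)).card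
      = (Finset.univ.filter (fun p : Fin (m+1) =>
        ((descents (m+1) σ : ℤ) + (indF m (toFun (m+1) σ) (p : ℕ) : ℤ) = d)
        ∧ ((σ 0 : ℕ) + 1 = k))).card := by
    intro σ
    refine Finset.card_bij (fun x _ => x.2) ?_ ?_ ?_
    · intro x hx
      simp only [Finset.mem_filter, Finset.mem_univ, true_and] at hx ⊢
      obtain ⟨hc, hfst⟩ := hx
      rw [hfst] at hc
      exact hc
    · intro a ha b hb h
      simp only [Finset.mem_filter, Finset.mem_univ, true_and] at ha hb
      exact Prod.ext (ha.2.trans hb.2.symm) h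
    · intro p hp
      simp only [Finset.mem_filter, Finset.mem_univ, true_and] at hp
      exact ⟨(σ, p), by simpa using hp, rfl⟩
  have hval : ∀ σ : Equiv.Perm (Fin (m+1)),
      (((Finset.univ.filter (fun p : Fin (m+1) =>
        ((descents (m+1) σ : ℤ) + (indF m (toFun (m+1) σ) (p : ℕ) : ℤ) = d)
        ∧ ((σ 0 : ℕ) + 1 = k))).card : ℤ))
      = (if (descents (m+1) σ : ℤ) = d ∧ ((σ 0 : ℕ) + 1 = k) then d + 1 else 0)
        + (if (descents (m+1) σ : ℤ) = d - 1 ∧ ((σ 0 : ℕ) + 1 = k)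
            then (m:ℤ) + 1 - d else 0) := by
    intro σ
    by_cases hh : (σ 0 : ℕ) + 1 = k
    · by_cases h1 : (descents (m+1) σ : ℤ) = d
      · rw [if_pos ⟨h1, hh⟩, if_neg (by rintro ⟨h2, -⟩; omega)]
        have hfeq : (Finset.univ.filter (fun p : Fin (m+1) =>
            ((descents (m+1) σ : ℤ) + (indF m (toFun (m+1) σ) (p : ℕ) : ℤ) = d)
            ∧ ((σ 0 : ℕ) + 1 = k)))
            = Finset.univ.filter (fun p : Fin (m+1) =>
                indF m (toFun (m+1) σ) (p : ℕ) = 0) := by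
          apply Finset.filter_congr
          intro p _
          constructor
          · rintro ⟨hc, -⟩; omega
          · intro hc
            refine ⟨?_, hh⟩
            rw [hc]
            push_cast
            omega
        rw [hfeq, card_ind_zero]
        push_cast
        omega
      · by_cases h2 : (descents (m+1) σ : ℤ) = d - 1
        · rw [if_neg (by rintro ⟨h1', -⟩; omega), if_pos ⟨h2, hh⟩]
          have hfeq : (Finset.univ.filter (fun p : Fin (m+1) =>
              ((descents (m+1) σ : ℤ) + (indF m (toFun (m+1) σ) (p : ℕ) : ℤ) = d)
              ∧ ((σ 0 : ℕ) + 1 = k)))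
              = Finset.univ.filter (fun p : Fin (m+1) =>
                  indF m (toFun (m+1) σ) (p : ℕ) = 1) := by
            apply Finset.filter_congr
            intro p _
            constructor
            · rintro ⟨hc, -⟩; omega
            · intro hc
              refine ⟨?_, hh⟩
              rw [hc]
              push_cast
              omega
          rw [hfeq, card_ind_one]
          have hle := descents_le m σ
          push_cast [Nat.cast_sub hle]
          omega
        · rw [if_neg (by rintro ⟨h', -⟩; omega), if_neg (by rintro ⟨h', -⟩; omega)]
          have hfeq : (Finset.univ.filter (fun p : Fin (m+1) =>
              ((descents (m+1) σ : ℤ) + (indF m (toFun (m+1) σ) (p : ℕ) : ℤ) = d)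
              ∧ ((σ 0 : ℕ) + 1 = k))) = ∅ := by
            apply Finset.filter_false_of_mem
            intro p _
            rintro ⟨hc, -⟩
            have := indF_le m (toFun (m+1) σ) (p : ℕ)
            interval_cases h : indF m (toFun (m+1) σ) (p : ℕ) <;> simp [h] at hc <;> omega
          rw [hfeq]
          simp
    · rw [if_neg (by rintro ⟨-, h⟩; exact hh h), if_neg (by rintro ⟨-, h⟩; exact hh h)]
      have hfeq : (Finset.univ.filter (fun p : Fin (m+1) =>
          ((descents (m+1) σ : ℤ) + (indF m (toFun (m+1) σ) (p : ℕ) : ℤ) = d)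
          ∧ ((σ 0 : ℕ) + 1 = k))) = ∅ := by
        apply Finset.filter_false_of_mem
        intro p _
        rintro ⟨-, h⟩
        exact hh h
      rw [hfeq]
      simp
  push_cast
  calc (∑ σ : Equiv.Perm (Fin (m+1)), (((Finset.univ.filter
        (fun x : Equiv.Perm (Fin (m+1)) × Fin (m+1) =>
        ((descents (m+1) x.1 : ℤ) + (indF m (toFun (m+1) x.1) (x.2 : ℕ) : ℤ) = d)
        ∧ ((x.1 0 : ℕ) + 1 = k))).filter (fun x => x.1 = σ)).card : ℤ))
      = ∑ σ : Equiv.Perm (Fin (m+1)),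
        ((if (descents (m+1) σ : ℤ) = d ∧ ((σ 0 : ℕ) + 1 = k) then d + 1 else 0)
        + (if (descents (m+1) σ : ℤ) = d - 1 ∧ ((σ 0 : ℕ) + 1 = k)
            then (m:ℤ) + 1 - d else 0)) := by
        apply Finset.sum_congr rfl
        intro σ _
        rw [hfib σ, hval σ]
    _ = (d+1) * A (m+1) d k + ((m:ℤ) + 1 - d) * A (m+1) (d-1) k := by
        rw [Finset.sum_add_distrib, ← Finset.sum_filter, ← Finset.sum_filter,
          Finset.sum_const, Finset.sum_const, A_eq, A_eq]
        push_cast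
        ring

theorem stmt5 (n : ℕ) (hn : 1 < n) (d : ℤ) (k : ℕ) (hk1 : 1 ≤ k) (hkn : k ≤ n - 1) :
    (A n d k : ℤ) = ((n : ℤ) - d - 1) * A (n - 1) (d - 1) k + (d + 1) * A (n - 1) d k := by
  obtain ⟨m, rfl⟩ : ∃ m, n = m + 2 := ⟨n - 2, by omega⟩
  rw [show m + 2 - 1 = m + 1 from rfl] at hkn ⊢
  rw [step1 m d k (by omega), step2 m d k]
  push_cast
  ring
end

section
/- For 0 ≤ d ≤ n-1, Σ_{k=1}^{n} k·A(n,d,k) = (d+1)·A(n,d); equivalently, if π is chosen uniformly from permutations of {1,...,n} with exactly d descents, then E[π(1)] = d+1. -/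
open Finset

namespace Stmt7Aux

def desSeq (L : ℕ) (v : ℕ → ℕ) : ℕ := ∑ i ∈ Finset.range L, if v (i+1) < v i then 1 else 0

lemma desSeq_le (L : ℕ) (v : ℕ → ℕ) : desSeq L v ≤ L := by
  calc desSeq L v ≤ ∑ _i ∈ Finset.range L, 1 :=
        Finset.sum_le_sum (by intro i _; split <;> simp)
    _ = L := by simp

lemma desSeq_congr {L : ℕ} {v w : ℕ → ℕ} (h : ∀ i ≤ L, v i = w i) :
    desSeq L v = desSeq L w := by
  unfold desSeq
  refine Finset.sum_congr rfl fun i hi => ?_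
  rw [Finset.mem_range] at hi
  rw [h i (by omega), h (i+1) (by omega)]

lemma sumNotDes (L c : ℕ) (v : ℕ → ℕ) :
    ∑ i ∈ Finset.range L, (if v (i+1) < v i then 0 else c) = (L - desSeq L v) * c := by
  have h1 : ∑ i ∈ Finset.range L, (if v (i+1) < v i then 0 else c)
      + ∑ i ∈ Finset.range L, (if v (i+1) < v i then c else 0) = L * c := by
    rw [← Finset.sum_add_distrib]
    have : ∀ i ∈ Finset.range L,
        ((if v (i+1) < v i then 0 else c) + (if v (i+1) < v i then c else 0)) = c := by
      intro i _; split <;> simp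
    rw [Finset.sum_congr rfl this, Finset.sum_const, Finset.card_range, smul_eq_mul]
  have h2 : ∑ i ∈ Finset.range L, (if v (i+1) < v i then c else 0) = desSeq L v * c := by
    unfold desSeq
    rw [Finset.sum_mul]
    refine Finset.sum_congr rfl fun i _ => ?_
    split <;> simp
  have h3 : desSeq L v ≤ L := desSeq_le _ _
  have h4 : (L - desSeq L v) * c + desSeq L v * c = L * c := by
    rw [← Nat.add_mul, Nat.sub_add_cancel h3]
  omega

def vseq {n : ℕ} (π : Equiv.Perm (Fin n)) : ℕ → ℕ :=
  fun i => if h : i < n then (π ⟨i, h⟩ : ℕ) else 0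

lemma descents_eq (n : ℕ) (π : Equiv.Perm (Fin n)) :
    descents n π = desSeq (n-1) (vseq π) := by
  have h2 : (∑ i : Fin n, (if (∃ j : Fin n, (j : ℕ) = (i : ℕ) + 1 ∧ π j < π i) then 1 else 0) : ℕ)
      = ∑ i : Fin n, (fun q => if h : q + 1 < n then
          (if vseq π (q+1) < vseq π q then 1 else 0) else 0) (i : ℕ) := by
    refine Finset.sum_congr rfl fun i _ => ?_
    simp only
    by_cases h : (i : ℕ) + 1 < n
    · rw [dif_pos h]
      have hv1 : vseq π ((i:ℕ)+1) = (π ⟨(i:ℕ)+1, h⟩ : ℕ) := dif_pos h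
      have hv0 : vseq π (i:ℕ) = (π i : ℕ) := by
        show dite _ _ _ = _
        rw [dif_pos i.isLt]
      rw [hv1, hv0]
      refine if_congr ?_ rfl rfl
      constructor
      · rintro ⟨j, hj1, hj2⟩
        have hj : j = ⟨(i:ℕ)+1, h⟩ := Fin.ext hj1
        rw [hj] at hj2
        exact hj2
      · intro hlt
        exact ⟨⟨(i:ℕ)+1, h⟩, rfl, hlt⟩
    · rw [dif_neg h, if_neg]
      rintro ⟨j, hj1, -⟩
      exact h (hj1 ▸ j.isLt)
  have key : descents n π = ∑ q ∈ Finset.range n,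
      (if h : q + 1 < n then (if vseq π (q+1) < vseq π q then 1 else 0) else 0) := by
    unfold descents
    rw [Finset.card_filter, h2]
    exact Fin.sum_univ_eq_sum_range (fun q => if _h : q + 1 < n then (if vseq π (q+1) < vseq π q then 1 else 0) else 0) n
  have h3 : ∑ q ∈ Finset.range n,
        (if h : q + 1 < n then (if vseq π (q+1) < vseq π q then 1 else 0) else 0)
      = ∑ q ∈ Finset.range (n-1),
        (if h : q + 1 < n then (if vseq π (q+1) < vseq π q then 1 else 0) else 0) := by
    refine (Finset.sum_subset (Finset.range_subset_range.2 (Nat.sub_le n 1)) ?_).symm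
    intro q hq hq'
    rw [Finset.mem_range] at hq hq'
    rw [dif_neg (by omega)]
  rw [key, h3]
  refine Finset.sum_congr rfl fun q hq => ?_
  rw [Finset.mem_range] at hq
  rw [dif_pos (by omega)]

lemma descents_le (n : ℕ) (π : Equiv.Perm (Fin n)) : descents n π ≤ n - 1 := by
  rw [descents_eq]; exact desSeq_le _ _

def wins (p M : ℕ) (v : ℕ → ℕ) : ℕ → ℕ :=
  fun i => if i < p then v i else if i = p then M else v (i-1)

lemma desSeq_wins {m p M : ℕ} {v : ℕ → ℕ} (hm : 1 ≤ m) (hp : p ≤ m)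
    (hv : ∀ i < m, v i < M) :
    desSeq m (wins p M v) = desSeq (m-1) v +
      (if p = 0 then 1 else if p = m then 0 else (if v p < v (p-1) then 0 else 1)) := by
  obtain ⟨m', rfl⟩ : ∃ m', m = m' + 1 := ⟨m - 1, by omega⟩
  simp only [Nat.add_sub_cancel]
  unfold desSeq
  by_cases hp0 : p = 0
  · subst hp0
    rw [if_pos rfl, Finset.sum_range_succ']
    have h0 : (if wins 0 M v (0+1) < wins 0 M v 0 then 1 else 0) = 1 := by
      have e1 : wins 0 M v (0+1) = v 0 := by simp [wins]
      have e0 : wins 0 M v 0 = M := by simp [wins]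
      rw [e1, e0, if_pos (hv 0 (by omega))]
    have hcong : ∑ i ∈ Finset.range m',
          (if wins 0 M v (i+1+1) < wins 0 M v (i+1) then 1 else 0)
        = ∑ i ∈ Finset.range m', (if v (i+1) < v i then 1 else 0) := by
      refine Finset.sum_congr rfl fun i _ => ?_
      have e1 : wins 0 M v (i+1+1) = v (i+1) := by simp [wins]
      have e2 : wins 0 M v (i+1) = v i := by simp [wins]
      rw [e1, e2]
    rw [hcong, h0]
  · by_cases hpm : p = m' + 1
    · subst hpm
      rw [if_neg hp0, if_pos rfl, Nat.add_zero, Finset.sum_range_succ]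
      have hlast : (if wins (m'+1) M v (m'+1) < wins (m'+1) M v m' then 1 else 0) = 0 := by
        have e1 : wins (m'+1) M v (m'+1) = M := by simp [wins]
        have e2 : wins (m'+1) M v m' = v m' := by simp [wins]
        rw [e1, e2, if_neg (Nat.not_lt.2 (le_of_lt (hv m' (by omega))))]
      have hcong : ∑ i ∈ Finset.range m',
            (if wins (m'+1) M v (i+1) < wins (m'+1) M v i then 1 else 0)
          = ∑ i ∈ Finset.range m', (if v (i+1) < v i then 1 else 0) := by
        refine Finset.sum_congr rfl fun i hi => ?_
        rw [Finset.mem_range] at hi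
        have e1 : wins (m'+1) M v (i+1) = v (i+1) := by
          have h1 : i + 1 < m' + 1 := by omega
          simp [wins, h1]
        have e2 : wins (m'+1) M v i = v i := by
          have h1 : i < m' + 1 := by omega
          simp [wins, h1]
        rw [e1, e2]
      rw [hlast, hcong, Nat.add_zero]
    · -- 0 < p < m
      obtain ⟨p', rfl⟩ : ∃ p', p = p' + 1 := ⟨p - 1, by omega⟩
      have hpm' : p' + 1 ≤ m' := by omega
      rw [if_neg hp0, if_neg hpm]
      have hsplitL : ∑ i ∈ Finset.range (m'+1),
            (if wins (p'+1) M v (i+1) < wins (p'+1) M v i then 1 else 0)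
          = ∑ i ∈ Finset.range (p'+1+1),
              (if wins (p'+1) M v (i+1) < wins (p'+1) M v i then 1 else 0)
            + ∑ i ∈ Finset.Ico (p'+1+1) (m'+1),
              (if wins (p'+1) M v (i+1) < wins (p'+1) M v i then 1 else 0) := by
        simp only [Finset.range_eq_Ico]
        exact (Finset.sum_Ico_consecutive _ (by omega) (by omega)).symm
      have hsplitR : ∑ i ∈ Finset.range m', (if v (i+1) < v i then 1 else 0)
          = ∑ i ∈ Finset.range (p'+1), (if v (i+1) < v i then 1 else 0)
            + ∑ i ∈ Finset.Ico (p'+1) m', (if v (i+1) < v i then 1 else 0) := by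
        simp only [Finset.range_eq_Ico]
        exact (Finset.sum_Ico_consecutive _ (by omega) (by omega)).symm
      have htail : ∑ i ∈ Finset.Ico (p'+1+1) (m'+1),
            (if wins (p'+1) M v (i+1) < wins (p'+1) M v i then 1 else 0)
          = ∑ i ∈ Finset.Ico (p'+1) m', (if v (i+1) < v i then 1 else 0) := by
        rw [Finset.sum_Ico_eq_sum_range, Finset.sum_Ico_eq_sum_range]
        have hlen : m' + 1 - (p' + 1 + 1) = m' - (p' + 1) := by omega
        rw [hlen]
        refine Finset.sum_congr rfl fun i _ => ?_
        have e1 : wins (p'+1) M v (p' + 1 + 1 + i + 1) = v (p' + 1 + i + 1) := by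
          have h1 : ¬ (p' + 1 + 1 + i + 1 < p' + 1) := by omega
          have h2 : ¬ (p' + 1 + 1 + i + 1 = p' + 1) := by omega
          simp only [wins, if_neg h1, h2, if_false]
          congr 1; omega
        have e2 : wins (p'+1) M v (p' + 1 + 1 + i) = v (p' + 1 + i) := by
          have h1 : ¬ (p' + 1 + 1 + i < p' + 1) := by omega
          have h2 : ¬ (p' + 1 + 1 + i = p' + 1) := by omega
          simp only [wins, if_neg h1, h2, if_false]
          congr 1; omega
        rw [e1, e2]
      have hheadL : ∑ i ∈ Finset.range (p'+1+1),
            (if wins (p'+1) M v (i+1) < wins (p'+1) M v i then 1 else 0)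
          = ∑ i ∈ Finset.range p',
              (if wins (p'+1) M v (i+1) < wins (p'+1) M v i then 1 else 0)
            + (if wins (p'+1) M v (p'+1) < wins (p'+1) M v p' then 1 else 0)
            + (if wins (p'+1) M v (p'+1+1) < wins (p'+1) M v (p'+1) then 1 else 0) := by
        rw [Finset.sum_range_succ, Finset.sum_range_succ]
      have hheadR : ∑ i ∈ Finset.range (p'+1), (if v (i+1) < v i then 1 else 0)
          = ∑ i ∈ Finset.range p', (if v (i+1) < v i then 1 else 0)
            + (if v (p'+1) < v p' then 1 else 0) := Finset.sum_range_succ _ _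
      have hfp' : (if wins (p'+1) M v (p'+1) < wins (p'+1) M v p' then 1 else 0) = 0 := by
        have e1 : wins (p'+1) M v (p'+1) = M := by simp [wins]
        have e2 : wins (p'+1) M v p' = v p' := by simp [wins]
        rw [e1, e2, if_neg (Nat.not_lt.2 (le_of_lt (hv p' (by omega))))]
      have hfp1 : (if wins (p'+1) M v (p'+1+1) < wins (p'+1) M v (p'+1) then 1 else 0) = 1 := by
        have e1 : wins (p'+1) M v (p'+1+1) = v (p'+1) := by
          have h1 : ¬ (p'+1+1 < p'+1) := by omega
          have h2 : ¬ (p'+1+1 = p'+1) := by omega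
          simp only [wins, if_neg h1, h2, if_false, Nat.add_sub_cancel]
        have e2 : wins (p'+1) M v (p'+1) = M := by simp [wins]
        rw [e1, e2, if_pos (hv (p'+1) (by omega))]
      have hhead2 : ∑ i ∈ Finset.range p',
            (if wins (p'+1) M v (i+1) < wins (p'+1) M v i then 1 else 0)
          = ∑ i ∈ Finset.range p', (if v (i+1) < v i then 1 else 0) := by
        refine Finset.sum_congr rfl fun i hi => ?_
        rw [Finset.mem_range] at hi
        have e1 : wins (p'+1) M v (i+1) = v (i+1) := by
          have h1 : i + 1 < p' + 1 := by omega
          simp [wins, h1]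
        have e2 : wins (p'+1) M v i = v i := by
          have h1 : i < p' + 1 := by omega
          simp [wins, h1]
        rw [e1, e2]
      rw [hsplitL, htail, hheadL, hfp', hfp1, hhead2, hsplitR, hheadR]
      have hc : p' + 1 - 1 = p' := by omega
      rw [hc]
      by_cases hd : v (p'+1) < v p'
      · rw [if_pos hd, if_pos hd]; omega
      · rw [if_neg hd, if_neg hd]; omega

def Φ {m : ℕ} (p : Fin (m+1)) (τ : Equiv.Perm (Fin m)) : Equiv.Perm (Fin (m+1)) :=
  ((finSuccEquiv' p).trans (Equiv.optionCongr τ)).trans (finSuccEquiv' (Fin.last m)).symm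

lemma Φ_at {m : ℕ} (p : Fin (m+1)) (τ : Equiv.Perm (Fin m)) : Φ p τ p = Fin.last m := by
  simp [Φ, finSuccEquiv'_at]

lemma Φ_succAbove {m : ℕ} (p : Fin (m+1)) (τ : Equiv.Perm (Fin m)) (j : Fin m) :
    Φ p τ (p.succAbove j) = (τ j).castSucc := by
  simp [Φ, finSuccEquiv'_succAbove, finSuccEquiv'_symm_some, Fin.succAbove_last]

lemma Φ_bij {m : ℕ} :
    Function.Bijective (fun x : Fin (m+1) × Equiv.Perm (Fin m) => Φ x.1 x.2) := by
  rw [Fintype.bijective_iff_injective_and_card]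
  constructor
  · rintro ⟨p, τ⟩ ⟨p', τ'⟩ h
    simp only at h
    have hp : p = p' := by
      have h1 : Φ p' τ' p = Fin.last m := by rw [← h]; exact Φ_at p τ
      have h2 : Φ p' τ' p' = Fin.last m := Φ_at p' τ'
      exact (Φ p' τ').injective (h1.trans h2.symm)
    subst hp
    have hτ : τ = τ' := by
      apply Equiv.ext
      intro j
      have h1 : Φ p τ (p.succAbove j) = Φ p τ' (p.succAbove j) := by rw [h]
      rw [Φ_succAbove, Φ_succAbove] at h1
      exact Fin.castSucc_injective _ h1
    rw [hτ]
  · simp [Fintype.card_perm, Fintype.card_fin, Nat.factorial_succ]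

lemma vseq_Φ {m : ℕ} (p : Fin (m+1)) (τ : Equiv.Perm (Fin m)) (i : ℕ) (hi : i ≤ m) :
    vseq (Φ p τ) i = wins (p : ℕ) m (vseq τ) i := by
  have hi' : i < m + 1 := by omega
  have hv : vseq (Φ p τ) i = ((Φ p τ) ⟨i, hi'⟩ : ℕ) := dif_pos hi'
  by_cases hip : (⟨i, hi'⟩ : Fin (m+1)) = p
  · have hpv : (p : ℕ) = i := by rw [← hip]
    rw [hv, hip, Φ_at]
    simp only [wins, hpv]
    rw [if_neg (lt_irrefl i)]
    simp [Fin.val_last]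
  · obtain ⟨j, hj⟩ := Fin.exists_succAbove_eq hip
    rw [hv, ← hj, Φ_succAbove]
    rcases lt_or_ge (j.castSucc) p with hc | hc
    · have hsa : p.succAbove j = j.castSucc := Fin.succAbove_of_castSucc_lt _ _ hc
      have hij : i = (j : ℕ) := by
        have h' := congrArg Fin.val hj
        rw [hsa] at h'
        simpa using h'.symm
      have hjp : (j : ℕ) < (p : ℕ) := by simpa [Fin.lt_def] using hc
      have hw : wins (p:ℕ) m (vseq τ) i = vseq τ i := if_pos (by omega)
      rw [hw, hij]
      show _ = dite _ _ _
      rw [dif_pos j.isLt]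
      simp
    · have hsa : p.succAbove j = j.succ := Fin.succAbove_of_le_castSucc _ _ hc
      have hij : i = (j : ℕ) + 1 := by
        have h' := congrArg Fin.val hj
        rw [hsa] at h'
        simpa using h'.symm
      have hjp : (p : ℕ) ≤ (j : ℕ) := by simpa [Fin.le_def] using hc
      have h2 : ¬ (i = (p : ℕ)) := fun hh => hip (Fin.ext (by simp [hh]))
      have hw : wins (p:ℕ) m (vseq τ) i = vseq τ (i-1) := by
        unfold wins
        rw [if_neg (by omega), if_neg h2]
      rw [hw, hij, Nat.add_sub_cancel]
      show _ = dite _ _ _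
      rw [dif_pos j.isLt]
      simp

lemma descents_Φ {m : ℕ} (hm : 1 ≤ m) (p : Fin (m+1)) (τ : Equiv.Perm (Fin m)) :
    descents (m+1) (Φ p τ) = descents m τ +
      (if (p:ℕ) = 0 then 1 else if (p:ℕ) = m then 0 else
        (if vseq τ (p:ℕ) < vseq τ ((p:ℕ)-1) then 0 else 1)) := by
  rw [descents_eq, descents_eq]
  simp only [Nat.add_sub_cancel]
  have h1 : desSeq m (vseq (Φ p τ)) = desSeq m (wins (p:ℕ) m (vseq τ)) :=
    desSeq_congr (fun i hi => vseq_Φ p τ i hi)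
  rw [h1, desSeq_wins hm (Nat.lt_succ_iff.mp p.isLt)]
  intro i hi
  show dite _ _ _ < m
  rw [dif_pos hi]
  exact (τ ⟨i, hi⟩).isLt

lemma first_Φ {m : ℕ} (p : Fin (m+1)) (τ : Equiv.Perm (Fin m)) :
    vseq (Φ p τ) 0 = if (p:ℕ) = 0 then m else vseq τ 0 := by
  rw [vseq_Φ p τ 0 (by omega)]
  unfold wins
  by_cases h : (p : ℕ) = 0
  · rw [if_pos h, if_neg (by omega), if_pos h.symm]
  · rw [if_neg h, if_pos (by omega)]

lemma inner_sum {m : ℕ} (hm : 1 ≤ m) (τ : Equiv.Perm (Fin m)) (d : ℕ) (F : ℕ → ℕ) :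
    ∑ p : Fin (m+1), (if descents (m+1) (Φ p τ) = d then F (vseq (Φ p τ) 0) else 0)
    = (if descents m τ = d then (descents m τ + 1) * F (vseq τ 0) else 0)
      + (if descents m τ + 1 = d then (m - 1 - descents m τ) * F (vseq τ 0) + F m else 0) := by
  obtain ⟨m', rfl⟩ : ∃ m', m = m' + 1 := ⟨m - 1, by omega⟩
  set e := descents (m'+1) τ with he_def
  set g : ℕ → ℕ := fun q => if e +
          (if q = 0 then 1 else if q = m'+1 then 0 else
            (if vseq τ q < vseq τ (q-1) then 0 else 1)) = d
          then F (if q = 0 then m'+1 else vseq τ 0) else 0 with hg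
  have hstep1 : ∑ p : Fin (m'+1+1), (if descents (m'+1+1) (Φ p τ) = d then F (vseq (Φ p τ) 0) else 0)
      = ∑ p : Fin (m'+1+1), g ((p : ℕ)) := by
    refine Finset.sum_congr rfl fun p _ => ?_
    rw [hg]
    simp only
    rw [descents_Φ hm p τ, first_Φ p τ]
  rw [hstep1, Fin.sum_univ_eq_sum_range g (m'+1+1)]
  rw [Finset.sum_range_succ', Finset.sum_range_succ]
  have hg0 : g 0 = (if e + 1 = d then F (m'+1) else 0) := by
    simp [hg]
  have hgm : g (m'+1) = (if e = d then F (vseq τ 0) else 0) := by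
    simp [hg]
  have hdes : desSeq m' (vseq τ) = e := (descents_eq (m'+1) τ).symm
  have hmid : ∑ q ∈ Finset.range m', g (q+1)
      = ∑ q ∈ Finset.range m',
        (if e + (if vseq τ (q+1) < vseq τ q then 0 else 1) = d then F (vseq τ 0) else 0) := by
    refine Finset.sum_congr rfl fun q hq => ?_
    rw [Finset.mem_range] at hq
    have h1 : q + 1 ≠ 0 := by omega
    have h2 : q + 1 ≠ m' + 1 := by omega
    have h3 : q ≠ m' := by omega
    simp [hg, h1, h2, h3]
  rw [hmid, hgm, hg0]
  by_cases he : e = d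
  · have hne : ¬ (e + 1 = d) := by omega
    rw [if_pos he, if_pos he, if_neg hne, if_neg hne, Nat.add_zero]
    have hsum : ∑ q ∈ Finset.range m',
          (if e + (if vseq τ (q+1) < vseq τ q then 0 else 1) = d then F (vseq τ 0) else 0)
        = ∑ q ∈ Finset.range m', (if vseq τ (q+1) < vseq τ q then F (vseq τ 0) else 0) := by
      refine Finset.sum_congr rfl fun q _ => ?_
      by_cases hq : vseq τ (q+1) < vseq τ q
      · rw [if_pos hq, if_pos hq, if_pos (by omega)]
      · rw [if_neg hq, if_neg hq, if_neg (by omega)]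
    have hsum2 : ∑ q ∈ Finset.range m', (if vseq τ (q+1) < vseq τ q then F (vseq τ 0) else 0)
        = desSeq m' (vseq τ) * F (vseq τ 0) := by
      unfold desSeq
      rw [Finset.sum_mul]
      refine Finset.sum_congr rfl fun q _ => ?_
      split <;> simp
    rw [hsum, hsum2, hdes, he]
    ring
  · by_cases he1 : e + 1 = d
    · rw [if_neg he, if_neg he, if_pos he1, if_pos he1]
      have hsum : ∑ q ∈ Finset.range m',
            (if e + (if vseq τ (q+1) < vseq τ q then 0 else 1) = d then F (vseq τ 0) else 0)
          = ∑ q ∈ Finset.range m',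
            (if vseq τ (q+1) < vseq τ q then 0 else F (vseq τ 0)) := by
        refine Finset.sum_congr rfl fun q _ => ?_
        by_cases hq : vseq τ (q+1) < vseq τ q
        · rw [if_pos hq, if_pos hq, if_neg (by omega)]
        · rw [if_neg hq, if_neg hq, if_pos (by omega)]
      rw [hsum, sumNotDes m' (F (vseq τ 0)) (vseq τ), hdes]
      have : m' + 1 - 1 - e = m' - e := by omega
      rw [this]
      omega
    · rw [if_neg he, if_neg he, if_neg he1, if_neg he1]
      have hsum : ∑ q ∈ Finset.range m',
            (if e + (if vseq τ (q+1) < vseq τ q then 0 else 1) = d then F (vseq τ 0) else 0)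
          = 0 := by
        refine Finset.sum_eq_zero fun q _ => ?_
        rw [if_neg]
        split <;> omega
      rw [hsum]

lemma master {m : ℕ} (hm : 1 ≤ m) (d : ℕ) (F : ℕ → ℕ) :
    ∑ π ∈ Finset.univ.filter (fun π : Equiv.Perm (Fin (m+1)) => descents (m+1) π = d),
      F (vseq π 0)
    = ∑ τ ∈ Finset.univ.filter (fun τ : Equiv.Perm (Fin m) => descents m τ = d),
        (descents m τ + 1) * F (vseq τ 0)
      + ∑ τ ∈ Finset.univ.filter (fun τ : Equiv.Perm (Fin m) => descents m τ + 1 = d),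
          ((m - 1 - descents m τ) * F (vseq τ 0) + F m) := by
  rw [Finset.sum_filter, Finset.sum_filter, Finset.sum_filter]
  rw [← Fintype.sum_bijective _ Φ_bij
      (fun x : Fin (m+1) × Equiv.Perm (Fin m) =>
        if descents (m+1) (Φ x.1 x.2) = d then F (vseq (Φ x.1 x.2) 0) else 0)
      (fun π => if descents (m+1) π = d then F (vseq π 0) else 0)
      (fun x => rfl)]
  rw [Fintype.sum_prod_type, Finset.sum_comm, ← Finset.sum_add_distrib]
  exact Finset.sum_congr rfl fun τ _ => inner_sum hm τ d F

lemma aux_main : ∀ n : ℕ, 1 ≤ n → ∀ d : ℕ,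
    ∑ π ∈ Finset.univ.filter (fun π : Equiv.Perm (Fin n) => descents n π = d),
      (vseq π 0 + 1)
    = (d + 1) * (Finset.univ.filter
        (fun π : Equiv.Perm (Fin n) => descents n π = d)).card := by
  intro n
  induction n with
  | zero => intro h; omega
  | succ m ih =>
    intro _ d
    rcases Nat.eq_zero_or_pos m with hm0 | hm
    · -- base case n = 1
      subst hm0
      have hdes : ∀ π : Equiv.Perm (Fin 1), descents 1 π = 0 := by
        intro π
        rw [descents_eq]
        rfl
      have hv : ∀ π : Equiv.Perm (Fin 1), vseq π 0 = 0 := by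
        intro π
        have : π 0 = 0 := Subsingleton.elim _ _
        show dite _ _ _ = _
        rw [dif_pos (by omega)]
        simp [this]
      rcases Nat.eq_zero_or_pos d with hd0 | hd1
      · subst hd0
        have hfilter : Finset.univ.filter
            (fun π : Equiv.Perm (Fin 1) => descents 1 π = 0) = Finset.univ := by
          refine Finset.filter_true_of_mem fun π _ => hdes π
        rw [hfilter]
        have : (Finset.univ : Finset (Equiv.Perm (Fin 1))).card = 1 := by
          simp [Fintype.card_perm]
        rw [Finset.sum_congr rfl (fun π _ => by rw [hv π]), Finset.sum_const, this]
        simp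
      · have hfilter : Finset.univ.filter
            (fun π : Equiv.Perm (Fin 1) => descents 1 π = d) = ∅ := by
          refine Finset.filter_false_of_mem fun π _ => ?_
          rw [hdes π]
          omega
        rw [hfilter]
        simp
    · -- inductive step, n = m + 1 with m ≥ 1
      have hS := master hm d (fun x => x + 1)
      have hE := master hm d (fun _ => (1:ℕ))
      have hEcard : (Finset.univ.filter
          (fun π : Equiv.Perm (Fin (m+1)) => descents (m+1) π = d)).card
          = ∑ _π ∈ Finset.univ.filter
            (fun π : Equiv.Perm (Fin (m+1)) => descents (m+1) π = d), (1:ℕ) := by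
        simp
      rcases d with _ | d'
      · -- d = 0 : second filters empty
        have hf2 : Finset.univ.filter
            (fun τ : Equiv.Perm (Fin m) => descents m τ + 1 = 0) = ∅ :=
          Finset.filter_false_of_mem (fun τ _ => by omega)
        rw [hf2, Finset.sum_empty, Nat.add_zero] at hS hE
        have hs1 : ∑ τ ∈ Finset.univ.filter
              (fun τ : Equiv.Perm (Fin m) => descents m τ = 0),
              (descents m τ + 1) * (vseq τ 0 + 1)
            = ∑ τ ∈ Finset.univ.filter
              (fun τ : Equiv.Perm (Fin m) => descents m τ = 0), (vseq τ 0 + 1) := by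
          refine Finset.sum_congr rfl fun τ hτ => ?_
          rw [Finset.mem_filter] at hτ
          rw [hτ.2]
          ring
        have he1 : ∑ τ ∈ Finset.univ.filter
              (fun τ : Equiv.Perm (Fin m) => descents m τ = 0),
              (descents m τ + 1) * 1
            = ∑ τ ∈ Finset.univ.filter
              (fun τ : Equiv.Perm (Fin m) => descents m τ = 0), (1:ℕ) := by
          refine Finset.sum_congr rfl fun τ hτ => ?_
          rw [Finset.mem_filter] at hτ
          rw [hτ.2]
        rw [hs1] at hS
        rw [he1] at hE
        rw [hS, hEcard, hE, ih hm 0]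
        simp
      · -- d = d' + 1
        have hf2 : Finset.univ.filter
            (fun τ : Equiv.Perm (Fin m) => descents m τ + 1 = d'+1)
            = Finset.univ.filter (fun τ : Equiv.Perm (Fin m) => descents m τ = d') := by
          refine Finset.filter_congr fun τ _ => by omega
        rw [hf2] at hS hE
        set E1 := (Finset.univ.filter
          (fun τ : Equiv.Perm (Fin m) => descents m τ = d'+1)).card with hE1
        set E0 := (Finset.univ.filter
          (fun τ : Equiv.Perm (Fin m) => descents m τ = d')).card with hE0
        have hs1 : ∑ τ ∈ Finset.univ.filter
              (fun τ : Equiv.Perm (Fin m) => descents m τ = d'+1),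
              (descents m τ + 1) * (vseq τ 0 + 1)
            = (d'+1+1) * ∑ τ ∈ Finset.univ.filter
              (fun τ : Equiv.Perm (Fin m) => descents m τ = d'+1), (vseq τ 0 + 1) := by
          rw [Finset.mul_sum]
          refine Finset.sum_congr rfl fun τ hτ => ?_
          rw [Finset.mem_filter] at hτ
          rw [hτ.2]
        have hs2 : ∑ τ ∈ Finset.univ.filter
              (fun τ : Equiv.Perm (Fin m) => descents m τ = d'),
              ((m - 1 - descents m τ) * (vseq τ 0 + 1) + (m + 1))
            = (m-1-d') * (∑ τ ∈ Finset.univ.filter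
                (fun τ : Equiv.Perm (Fin m) => descents m τ = d'), (vseq τ 0 + 1))
              + (m+1) * E0 := by
          rw [Finset.sum_add_distrib, Finset.mul_sum]
          congr 1
          · refine Finset.sum_congr rfl fun τ hτ => ?_
            rw [Finset.mem_filter] at hτ
            rw [hτ.2]
          · rw [Finset.sum_const, hE0, smul_eq_mul, mul_comm]
        have he1 : ∑ τ ∈ Finset.univ.filter
              (fun τ : Equiv.Perm (Fin m) => descents m τ = d'+1),
              (descents m τ + 1) * (1:ℕ)
            = (d'+1+1) * E1 := by
          rw [hE1, Finset.card_eq_sum_ones, Finset.mul_sum]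
          refine Finset.sum_congr rfl fun τ hτ => ?_
          rw [Finset.mem_filter] at hτ
          rw [hτ.2]
        have he2 : ∑ τ ∈ Finset.univ.filter
              (fun τ : Equiv.Perm (Fin m) => descents m τ = d'),
              ((m - 1 - descents m τ) * (1:ℕ) + 1)
            = (m-1-d'+1) * E0 := by
          rw [hE0, Finset.card_eq_sum_ones, Finset.mul_sum]
          refine Finset.sum_congr rfl fun τ hτ => ?_
          rw [Finset.mem_filter] at hτ
          rw [hτ.2]
          ring
        rw [hs1, hs2, ih hm (d'+1), ih hm d', ← hE1, ← hE0] at hS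
        rw [he1, he2] at hE
        rw [hS, hEcard, hE]
        -- now pure arithmetic, need d' ≤ m - 1 when E0 ≠ 0
        rcases Nat.eq_zero_or_pos E0 with h0 | h0
        · rw [h0]
          ring
        · have hex : ∃ τ : Equiv.Perm (Fin m), descents m τ = d' := by
            rw [hE0] at h0
            obtain ⟨τ, hτ⟩ := Finset.card_pos.mp h0
            rw [Finset.mem_filter] at hτ
            exact ⟨τ, hτ.2⟩
          obtain ⟨τ0, hτ0⟩ := hex
          have hd'le : d' ≤ m - 1 := hτ0 ▸ descents_le m τ0
          obtain ⟨t, ht⟩ : ∃ t, m - 1 = d' + t := ⟨m - 1 - d', by omega⟩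
          have hmt : m = d' + t + 1 := by omega
          have hsub : m - 1 - d' = t := by omega
          rw [hsub, hmt]
          ring

end Stmt7Aux

theorem stmt7 (n : ℕ) (hn : 1 ≤ n) (d : ℕ) (hd : d ≤ n - 1) :
    ∑ k ∈ Finset.Icc 1 n, k * A n (d : ℤ) k = (d + 1) * Eul n (d : ℤ) := by
  classical
  have h0 : 0 < n := hn
  have hEul : Eul n (d : ℤ) = (Finset.univ.filter
      (fun π : Equiv.Perm (Fin n) => descents n π = d)).card := by
    unfold Eul
    congr 1
    refine Finset.filter_congr fun π _ => ?_
    exact Nat.cast_inj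
  have hA : ∀ k, A n (d:ℤ) k = ((Finset.univ.filter
      (fun π : Equiv.Perm (Fin n) => descents n π = d)).filter
      (fun π => Stmt7Aux.vseq π 0 + 1 = k)).card := by
    intro k
    unfold A
    rw [Finset.filter_filter]
    congr 1
    refine Finset.filter_congr fun π _ => ?_
    constructor
    · rintro ⟨hd1, i, hi0, hik⟩
      refine ⟨Nat.cast_inj.mp hd1, ?_⟩
      have hi : i = ⟨0, h0⟩ := Fin.ext hi0
      rw [hi] at hik
      show Stmt7Aux.vseq π 0 + 1 = k
      unfold Stmt7Aux.vseq
      rw [dif_pos h0]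
      exact hik
    · rintro ⟨hd1, hk⟩
      refine ⟨by exact_mod_cast hd1, ⟨0, h0⟩, rfl, ?_⟩
      unfold Stmt7Aux.vseq at hk
      rw [dif_pos h0] at hk
      exact hk
  have hterm : ∀ k, k * A n (d:ℤ) k = ∑ π ∈ (Finset.univ.filter
      (fun π : Equiv.Perm (Fin n) => descents n π = d)).filter
      (fun π => Stmt7Aux.vseq π 0 + 1 = k), (Stmt7Aux.vseq π 0 + 1) := by
    intro k
    rw [hA k, Finset.card_eq_sum_ones, Finset.mul_sum]
    refine Finset.sum_congr rfl fun π hπ => ?_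
    rw [Finset.mem_filter] at hπ
    rw [hπ.2, mul_one]
  calc ∑ k ∈ Finset.Icc 1 n, k * A n (d:ℤ) k
      = ∑ k ∈ Finset.Icc 1 n, ∑ π ∈ (Finset.univ.filter
          (fun π : Equiv.Perm (Fin n) => descents n π = d)).filter
          (fun π => Stmt7Aux.vseq π 0 + 1 = k), (Stmt7Aux.vseq π 0 + 1) :=
        Finset.sum_congr rfl fun k _ => hterm k
    _ = ∑ π ∈ Finset.univ.filter
          (fun π : Equiv.Perm (Fin n) => descents n π = d), (Stmt7Aux.vseq π 0 + 1) := by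
        refine Finset.sum_fiberwise_of_maps_to ?_ _
        intro π _
        rw [Finset.mem_Icc]
        constructor
        · omega
        · have : Stmt7Aux.vseq π 0 = (π ⟨0, h0⟩ : ℕ) := dif_pos h0
          rw [this]
          have := (π ⟨0, h0⟩).isLt
          omega
    _ = (d + 1) * (Finset.univ.filter
          (fun π : Equiv.Perm (Fin n) => descents n π = d)).card :=
        Stmt7Aux.aux_main n hn d
    _ = (d + 1) * Eul n (d:ℤ) := by rw [hEul]
end

section
/- If π is chosen uniformly from permutations of {1,...,n} with exactly d descents (0 ≤ d ≤ n-1), then the expected value of π(n) is n-d. -/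
open Finset

section EulerianDev
open Equiv
set_option maxHeartbeats 800000
def dcount {N : ℕ} (π : Equiv.Perm (Fin (N+1))) : ℕ :=
  (Finset.univ.filter (fun i : Fin N => π i.succ < π i.castSucc)).card

def ins {N : ℕ} (σ : Equiv.Perm (Fin N)) (p : Fin (N+1)) : Equiv.Perm (Fin (N+1)) :=
  ((finSuccEquiv' p).trans (Equiv.optionCongr σ)).trans (finSuccEquiv' (Fin.last N)).symm

lemma ins_apply_self {N : ℕ} (σ : Equiv.Perm (Fin N)) (p : Fin (N+1)) :
    ins σ p p = Fin.last N := by simp [ins]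

lemma ins_apply_succAbove {N : ℕ} (σ : Equiv.Perm (Fin N)) (p : Fin (N+1)) (j : Fin N) :
    ins σ p (p.succAbove j) = (σ j).castSucc := by simp [ins, Fin.succAbove_last]

lemma ins_apply_lt {M : ℕ} (σ : Equiv.Perm (Fin (M+1))) (p : Fin (M+2)) (q : Fin (M+2))
    (h : (q : ℕ) < (p : ℕ)) (hq : (q : ℕ) < M + 1) :
    ins σ p q = (σ ⟨q, hq⟩).castSucc := by
  have : q = p.succAbove ⟨q, hq⟩ := by
    rw [Fin.succAbove_of_castSucc_lt]; · rfl
    · exact h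
  calc ins σ p q = ins σ p (p.succAbove ⟨q, hq⟩) := by rw [← this]
    _ = _ := ins_apply_succAbove σ p _

lemma ins_apply_gt {M : ℕ} (σ : Equiv.Perm (Fin (M+1))) (p : Fin (M+2)) (q : Fin (M+2))
    (h : (p : ℕ) < (q : ℕ)) (hq : (q : ℕ) - 1 < M + 1) :
    ins σ p q = (σ ⟨(q : ℕ) - 1, hq⟩).castSucc := by
  have hq1 : 1 ≤ (q : ℕ) := Nat.one_le_of_lt (Nat.lt_of_le_of_lt (Nat.zero_le _) h)
  have : q = p.succAbove ⟨(q : ℕ) - 1, hq⟩ := by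
    rw [Fin.succAbove_of_le_castSucc]
    · ext; simp [Fin.val_succ]; omega
    · rw [Fin.le_castSucc_iff]
      simp only [Fin.lt_def, Fin.val_succ]
      omega
  calc ins σ p q = ins σ p (p.succAbove ⟨(q : ℕ) - 1, hq⟩) := by rw [← this]
    _ = _ := ins_apply_succAbove σ p _

lemma perm_congr {n : ℕ} (σ : Equiv.Perm (Fin n)) {a b : Fin n} (h : (a:ℕ) = (b:ℕ)) :
    σ a = σ b := by
  congr 1
  exact Fin.ext h

lemma dcount_ins {M : ℕ} (σ : Equiv.Perm (Fin (M+1))) (p : Fin (M+2)) :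
    dcount (ins σ p) = (if (p:ℕ) ≤ M then 1 else 0) +
      (Finset.univ.filter (fun j : Fin M =>
        σ j.succ < σ j.castSucc ∧ (j:ℕ) + 1 ≠ (p:ℕ))).card := by
  classical
  have hp2 : (p:ℕ) < M + 2 := p.isLt
  have hset : Finset.univ.filter (fun i : Fin (M+1) => ins σ p i.succ < ins σ p i.castSucc) =
      (Finset.univ.filter (fun i : Fin (M+1) => (i:ℕ) = (p:ℕ))) ∪
      (Finset.univ.filter (fun j : Fin M =>
        σ j.succ < σ j.castSucc ∧ (j:ℕ)+1 ≠ (p:ℕ))).image (fun j : Fin M =>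
          if (j:ℕ)+1 < (p:ℕ) then j.castSucc else j.succ) := by
    ext i
    simp only [mem_filter, mem_union, mem_image, mem_univ, true_and]
    constructor
    · intro hC
      by_cases h1 : (i:ℕ) + 1 < (p:ℕ)
      · right
        have him : (i:ℕ) < M := by omega
        have pf1 : ((i.succ : Fin (M+2)) : ℕ) < M + 1 := by simp only [Fin.val_succ] <;> omega
        have pf2 : ((i.castSucc : Fin (M+2)) : ℕ) < M + 1 := by
          simp only [Fin.coe_castSucc] <;> omega
        have e1 : ins σ p i.succ = (σ ⟨((i.succ : Fin (M+2)) : ℕ), pf1⟩).castSucc :=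
          ins_apply_lt σ p i.succ (by simp only [Fin.val_succ] <;> omega) pf1
        have e2 : ins σ p i.castSucc = (σ ⟨((i.castSucc : Fin (M+2)) : ℕ), pf2⟩).castSucc :=
          ins_apply_lt σ p i.castSucc (by simp only [Fin.coe_castSucc] <;> omega) pf2
        rw [e1, e2, Fin.castSucc_lt_castSucc_iff] at hC
        have g1 : σ (⟨(i:ℕ), him⟩ : Fin M).succ = σ ⟨((i.succ : Fin (M+2)) : ℕ), pf1⟩ :=
          perm_congr σ (by simp only [Fin.val_succ] <;> omega)
        have g2 : σ (⟨(i:ℕ), him⟩ : Fin M).castSucc =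
            σ ⟨((i.castSucc : Fin (M+2)) : ℕ), pf2⟩ :=
          perm_congr σ (by simp only [Fin.coe_castSucc] <;> omega)
        have hd : σ (⟨(i:ℕ), him⟩ : Fin M).succ < σ (⟨(i:ℕ), him⟩ : Fin M).castSucc := by
          rw [g1, g2]; exact hC
        have hne : ((⟨(i:ℕ), him⟩ : Fin M) : ℕ) + 1 ≠ (p:ℕ) := by simp only [] <;> omega
        have heq : (if ((⟨(i:ℕ), him⟩ : Fin M) : ℕ)+1 < (p:ℕ)
            then (⟨(i:ℕ), him⟩ : Fin M).castSucc else (⟨(i:ℕ), him⟩ : Fin M).succ) = i := by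
          rw [if_pos (by simpa using h1)]
          ext; simp
        exact ⟨⟨(i:ℕ), him⟩, ⟨hd, hne⟩, heq⟩
      · by_cases h2 : (i:ℕ) + 1 = (p:ℕ)
        · exfalso
          have : i.succ = p := by ext; simpa [Fin.val_succ] using h2
          rw [this, ins_apply_self] at hC
          exact absurd hC (not_lt.mpr (Fin.le_last _))
        · by_cases h3 : (i:ℕ) = (p:ℕ)
          · left; exact h3
          · right
            have hgt : (p:ℕ) < (i:ℕ) := by omega
            have him : (i:ℕ) - 1 < M := by omega
            have pf1 : ((i.succ : Fin (M+2)) : ℕ) - 1 < M + 1 := by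
              simp only [Fin.val_succ] <;> omega
            have pf2 : ((i.castSucc : Fin (M+2)) : ℕ) - 1 < M + 1 := by
              simp only [Fin.coe_castSucc] <;> omega
            have e1 : ins σ p i.succ =
                (σ ⟨((i.succ : Fin (M+2)) : ℕ) - 1, pf1⟩).castSucc :=
              ins_apply_gt σ p i.succ (by simp only [Fin.val_succ] <;> omega) pf1
            have e2 : ins σ p i.castSucc =
                (σ ⟨((i.castSucc : Fin (M+2)) : ℕ) - 1, pf2⟩).castSucc :=
              ins_apply_gt σ p i.castSucc (by simp only [Fin.coe_castSucc] <;> omega) pf2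
            rw [e1, e2, Fin.castSucc_lt_castSucc_iff] at hC
            have g1 : σ (⟨(i:ℕ)-1, him⟩ : Fin M).succ =
                σ ⟨((i.succ : Fin (M+2)) : ℕ) - 1, pf1⟩ :=
              perm_congr σ (by simp only [Fin.val_succ] <;> omega)
            have g2 : σ (⟨(i:ℕ)-1, him⟩ : Fin M).castSucc =
                σ ⟨((i.castSucc : Fin (M+2)) : ℕ) - 1, pf2⟩ :=
              perm_congr σ (by simp only [Fin.coe_castSucc] <;> omega)
            have hd : σ (⟨(i:ℕ)-1, him⟩ : Fin M).succ <
                σ (⟨(i:ℕ)-1, him⟩ : Fin M).castSucc := by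
              rw [g1, g2]; exact hC
            have hne : ((⟨(i:ℕ)-1, him⟩ : Fin M) : ℕ) + 1 ≠ (p:ℕ) := by
              simp only [] <;> omega
            have heq : (if ((⟨(i:ℕ)-1, him⟩ : Fin M) : ℕ)+1 < (p:ℕ)
                then (⟨(i:ℕ)-1, him⟩ : Fin M).castSucc
                else (⟨(i:ℕ)-1, him⟩ : Fin M).succ) = i := by
              rw [if_neg (by simp only [] <;> omega)]
              ext
              simp only [Fin.val_succ] <;> omega
            exact ⟨⟨(i:ℕ)-1, him⟩, ⟨hd, hne⟩, heq⟩
    · rintro (h3 | ⟨j, ⟨hdesc, hne⟩, rfl⟩)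
      · have hip : i.castSucc = p := by ext; simpa using h3
        have pf1 : ((i.succ : Fin (M+2)) : ℕ) - 1 < M + 1 := by
          simp only [Fin.val_succ] <;> omega
        have e1 : ins σ p i.succ = (σ ⟨((i.succ : Fin (M+2)) : ℕ) - 1, pf1⟩).castSucc :=
          ins_apply_gt σ p i.succ (by simp only [Fin.val_succ, ← hip, Fin.coe_castSucc] <;> omega)
            pf1
        rw [hip, ins_apply_self, e1]
        exact Fin.castSucc_lt_last _
      · by_cases h1 : (j:ℕ)+1 < (p:ℕ)
        · rw [if_pos h1]
          have pf1 : (((j.castSucc).succ : Fin (M+2)) : ℕ) < M + 1 := by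
            simp only [Fin.val_succ, Fin.coe_castSucc] <;> omega
          have pf2 : (((j.castSucc).castSucc : Fin (M+2)) : ℕ) < M + 1 := by
            simp only [Fin.coe_castSucc] <;> omega
          have e1 : ins σ p (j.castSucc).succ =
              (σ ⟨(((j.castSucc).succ : Fin (M+2)) : ℕ), pf1⟩).castSucc :=
            ins_apply_lt σ p _ (by simp only [Fin.val_succ, Fin.coe_castSucc] <;> omega) pf1
          have e2 : ins σ p (j.castSucc).castSucc =
              (σ ⟨(((j.castSucc).castSucc : Fin (M+2)) : ℕ), pf2⟩).castSucc :=
            ins_apply_lt σ p _ (by simp only [Fin.coe_castSucc] <;> omega) pf2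
          rw [e1, e2, Fin.castSucc_lt_castSucc_iff]
          have g1 : σ ⟨(((j.castSucc).succ : Fin (M+2)) : ℕ), pf1⟩ = σ j.succ :=
            perm_congr σ (by simp only [Fin.val_succ, Fin.coe_castSucc])
          have g2 : σ ⟨(((j.castSucc).castSucc : Fin (M+2)) : ℕ), pf2⟩ = σ j.castSucc :=
            perm_congr σ (by simp only [Fin.coe_castSucc])
          rw [g1, g2]; exact hdesc
        · rw [if_neg h1]
          have hjp : (p:ℕ) < (j:ℕ)+1 := by omega
          have pf1 : (((j.succ).succ : Fin (M+2)) : ℕ) - 1 < M + 1 := by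
            simp only [Fin.val_succ] <;> omega
          have pf2 : (((j.succ).castSucc : Fin (M+2)) : ℕ) - 1 < M + 1 := by
            simp only [Fin.coe_castSucc, Fin.val_succ] <;> omega
          have e1 : ins σ p (j.succ).succ =
              (σ ⟨(((j.succ).succ : Fin (M+2)) : ℕ) - 1, pf1⟩).castSucc :=
            ins_apply_gt σ p _ (by simp only [Fin.val_succ] <;> omega) pf1
          have e2 : ins σ p (j.succ).castSucc =
              (σ ⟨(((j.succ).castSucc : Fin (M+2)) : ℕ) - 1, pf2⟩).castSucc :=
            ins_apply_gt σ p _ (by simp only [Fin.coe_castSucc, Fin.val_succ] <;> omega) pf2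
          rw [e1, e2, Fin.castSucc_lt_castSucc_iff]
          have g1 : σ ⟨(((j.succ).succ : Fin (M+2)) : ℕ) - 1, pf1⟩ = σ j.succ :=
            perm_congr σ (by simp only [Fin.val_succ] <;> omega)
          have g2 : σ ⟨(((j.succ).castSucc : Fin (M+2)) : ℕ) - 1, pf2⟩ = σ j.castSucc :=
            perm_congr σ (by simp only [Fin.coe_castSucc, Fin.val_succ] <;> omega)
          rw [g1, g2]; exact hdesc
  have hdisj : Disjoint
      (Finset.univ.filter (fun i : Fin (M+1) => (i:ℕ) = (p:ℕ)))
      ((Finset.univ.filter (fun j : Fin M =>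
        σ j.succ < σ j.castSucc ∧ (j:ℕ)+1 ≠ (p:ℕ))).image (fun j : Fin M =>
          if (j:ℕ)+1 < (p:ℕ) then j.castSucc else j.succ)) := by
    rw [Finset.disjoint_left]
    rintro a ha hb
    simp only [mem_filter, mem_univ, true_and] at ha
    simp only [mem_image, mem_filter, mem_univ, true_and] at hb
    obtain ⟨j, ⟨_, hne⟩, hgj⟩ := hb
    by_cases h1 : (j:ℕ)+1 < (p:ℕ)
    · rw [if_pos h1] at hgj
      have : (a:ℕ) = (j:ℕ) := by rw [← hgj]; simp
      omega
    · rw [if_neg h1] at hgj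
      have : (a:ℕ) = (j:ℕ)+1 := by rw [← hgj]; simp [Fin.val_succ]
      omega
  have hinj : Set.InjOn (fun j : Fin M =>
      if (j:ℕ)+1 < (p:ℕ) then j.castSucc else j.succ) ↑(Finset.univ.filter (fun j : Fin M =>
      σ j.succ < σ j.castSucc ∧ (j:ℕ)+1 ≠ (p:ℕ))) := by
    intro a ha b hb hab
    simp only [Finset.coe_filter, Set.mem_setOf_eq, mem_univ, true_and] at ha hb
    simp only at hab
    have hva : ((if (a:ℕ)+1 < (p:ℕ) then a.castSucc else a.succ : Fin (M+1)) : ℕ) =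
        ((if (b:ℕ)+1 < (p:ℕ) then b.castSucc else b.succ : Fin (M+1)) : ℕ) := by rw [hab]
    ext
    by_cases h1 : (a:ℕ)+1 < (p:ℕ) <;> by_cases h2 : (b:ℕ)+1 < (p:ℕ) <;>
      simp only [h1, h2, if_true, if_false, Fin.coe_castSucc, Fin.val_succ] at hva <;> omega
  have hcard1 : (Finset.univ.filter (fun i : Fin (M+1) => (i:ℕ) = (p:ℕ))).card =
      if (p:ℕ) ≤ M then 1 else 0 := by
    by_cases hp : (p:ℕ) ≤ M
    · rw [if_pos hp]
      have : Finset.univ.filter (fun i : Fin (M+1) => (i:ℕ) = (p:ℕ)) = {⟨(p:ℕ), by omega⟩} := by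
        ext i; simp [Fin.ext_iff]
      rw [this, card_singleton]
    · rw [if_neg hp]
      rw [Finset.card_eq_zero]
      ext i; simp; omega
  rw [dcount, hset, Finset.card_union_of_disjoint hdisj, hcard1,
    Finset.card_image_of_injOn hinj]

def lastval {N : ℕ} (π : Equiv.Perm (Fin (N+1))) : ℕ := (π (Fin.last N) : ℕ) + 1

lemma lastval_ins_last {M : ℕ} (σ : Equiv.Perm (Fin (M+1))) :
    lastval (ins σ (Fin.last (M+1))) = M + 2 := by
  rw [lastval, ins_apply_self]
  simp

lemma lastval_ins_ne {M : ℕ} (σ : Equiv.Perm (Fin (M+1))) (p : Fin (M+2))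
    (hp : (p:ℕ) ≤ M) : lastval (ins σ p) = lastval σ := by
  have pf1 : ((Fin.last (M+1) : Fin (M+2)) : ℕ) - 1 < M + 1 := by simp
  have e1 : ins σ p (Fin.last (M+1)) =
      (σ ⟨((Fin.last (M+1) : Fin (M+2)) : ℕ) - 1, pf1⟩).castSucc :=
    ins_apply_gt σ p (Fin.last (M+1)) (by simp <;> omega) pf1
  rw [lastval, e1]
  have g1 : σ ⟨((Fin.last (M+1) : Fin (M+2)) : ℕ) - 1, pf1⟩ = σ (Fin.last M) :=
    perm_congr σ (by simp)
  rw [g1, lastval, Fin.coe_castSucc]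

/-- whether inserting at `p` lands right after a descent of `σ` (so the descent is destroyed). -/
def brk {M : ℕ} (σ : Equiv.Perm (Fin (M+1))) (p : Fin (M+2)) : Prop :=
  ∃ j : Fin M, (σ j.succ < σ j.castSucc) ∧ (j:ℕ) + 1 = (p:ℕ)

instance {M : ℕ} (σ : Equiv.Perm (Fin (M+1))) (p : Fin (M+2)) : Decidable (brk σ p) := by
  unfold brk; infer_instance

lemma dcount_ins_last {M : ℕ} (σ : Equiv.Perm (Fin (M+1))) :
    dcount (ins σ (Fin.last (M+1))) = dcount σ := by
  rw [dcount_ins]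
  rw [if_neg (by simp)]
  rw [zero_add, dcount]
  congr 1
  apply Finset.filter_congr
  intro j _
  have hj := j.isLt
  simp only [Fin.val_last]
  constructor
  · exact fun h => h.1
  · exact fun h => ⟨h, by omega⟩

lemma dcount_ins_brk {M : ℕ} (σ : Equiv.Perm (Fin (M+1))) (p : Fin (M+2))
    (hp : (p:ℕ) ≤ M) (hb : brk σ p) : dcount (ins σ p) = dcount σ := by
  classical
  obtain ⟨j0, hj0, hj0p⟩ := hb
  rw [dcount_ins, if_pos hp]
  have hsplit : Finset.univ.filter (fun j : Fin M => σ j.succ < σ j.castSucc) =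
      insert j0 (Finset.univ.filter (fun j : Fin M =>
        σ j.succ < σ j.castSucc ∧ (j:ℕ)+1 ≠ (p:ℕ))) := by
    ext j
    simp only [mem_filter, mem_insert, mem_univ, true_and]
    constructor
    · intro hj
      by_cases h : (j:ℕ) + 1 = (p:ℕ)
      · left; ext; omega
      · right; exact ⟨hj, h⟩
    · rintro (rfl | ⟨hj, _⟩)
      · exact hj0
      · exact hj
  have hnotmem : j0 ∉ Finset.univ.filter (fun j : Fin M =>
      σ j.succ < σ j.castSucc ∧ (j:ℕ)+1 ≠ (p:ℕ)) := by
    simp only [mem_filter, mem_univ, true_and, not_and]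
    intro _
    simpa using hj0p
  rw [dcount, hsplit, Finset.card_insert_of_notMem hnotmem]
  omega

lemma dcount_ins_nobrk {M : ℕ} (σ : Equiv.Perm (Fin (M+1))) (p : Fin (M+2))
    (hp : (p:ℕ) ≤ M) (hb : ¬ brk σ p) : dcount (ins σ p) = dcount σ + 1 := by
  rw [dcount_ins, if_pos hp]
  have : Finset.univ.filter (fun j : Fin M =>
      σ j.succ < σ j.castSucc ∧ (j:ℕ)+1 ≠ (p:ℕ)) =
      Finset.univ.filter (fun j : Fin M => σ j.succ < σ j.castSucc) := by
    apply Finset.filter_congr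
    intro j _
    simp only [and_iff_left_iff_imp]
    intro hj h
    exact hb ⟨j, hj, h⟩
  rw [this, dcount]
  omega

lemma card_brk {M : ℕ} (σ : Equiv.Perm (Fin (M+1))) :
    (Finset.univ.filter (fun p : Fin (M+2) => (p:ℕ) ≤ M ∧ brk σ p)).card = dcount σ := by
  classical
  rw [dcount]
  symm
  apply Finset.card_bij (fun (j : Fin M) _ => (⟨(j:ℕ)+1, by omega⟩ : Fin (M+2)))
  · intro j hj
    simp only [mem_filter, mem_univ, true_and] at hj ⊢
    constructor
    · have := j.isLt; omega
    · exact ⟨j, hj, rfl⟩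
  · intro a ha b hb hab
    have : (a:ℕ) + 1 = (b:ℕ) + 1 := congrArg Fin.val hab
    ext; omega
  · intro p hp
    simp only [mem_filter, mem_univ, true_and] at hp
    obtain ⟨hple, j, hj, hjp⟩ := hp
    exact ⟨j, by simpa using hj, by ext; simpa using hjp⟩

lemma card_le_M {M : ℕ} :
    (Finset.univ.filter (fun p : Fin (M+2) => (p:ℕ) ≤ M)).card = M + 1 := by
  have : Finset.univ.filter (fun p : Fin (M+2) => (p:ℕ) ≤ M) =
      Finset.univ.erase (Fin.last (M+1)) := by
    ext p
    have := p.isLt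
    simp only [mem_filter, mem_erase, mem_univ, true_and, and_true, Ne, Fin.ext_iff,
      Fin.val_last]
    omega
  rw [this, Finset.card_erase_of_mem (mem_univ _), Finset.card_univ, Fintype.card_fin]
  omega

lemma sum_ins_f {M : ℕ} (σ : Equiv.Perm (Fin (M+1))) (f : ℕ → ℕ → ℕ) :
    ∑ p : Fin (M+2), f (dcount (ins σ p)) (lastval (ins σ p)) =
      f (dcount σ) (M+2) + (dcount σ) * f (dcount σ) (lastval σ)
        + (M+1 - dcount σ) * f (dcount σ + 1) (lastval σ) := by
  classical
  have hstep1 : f (dcount (ins σ (Fin.last (M+1)))) (lastval (ins σ (Fin.last (M+1)))) +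
      ∑ p ∈ Finset.univ.erase (Fin.last (M+1)),
        f (dcount (ins σ p)) (lastval (ins σ p)) =
      ∑ p : Fin (M+2), f (dcount (ins σ p)) (lastval (ins σ p)) :=
    Finset.add_sum_erase Finset.univ (fun p => f (dcount (ins σ p)) (lastval (ins σ p)))
      (mem_univ _)
  have herase : Finset.univ.erase (Fin.last (M+1)) =
      Finset.univ.filter (fun p : Fin (M+2) => (p:ℕ) ≤ M) := by
    ext p
    have := p.isLt
    simp only [mem_filter, mem_erase, mem_univ, true_and, and_true, Ne, Fin.ext_iff,
      Fin.val_last]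
    omega
  rw [← hstep1, dcount_ins_last, lastval_ins_last, herase]
  rw [← Finset.sum_filter_add_sum_filter_not
    (Finset.univ.filter (fun p : Fin (M+2) => (p:ℕ) ≤ M)) (fun p => brk σ p)]
  have hbrkset : (Finset.univ.filter (fun p : Fin (M+2) => (p:ℕ) ≤ M)).filter
      (fun p => brk σ p) = Finset.univ.filter (fun p : Fin (M+2) => (p:ℕ) ≤ M ∧ brk σ p) := by
    rw [Finset.filter_filter]
  have hsum1 : ∑ p ∈ (Finset.univ.filter (fun p : Fin (M+2) => (p:ℕ) ≤ M)).filter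
      (fun p => brk σ p), f (dcount (ins σ p)) (lastval (ins σ p)) =
      (dcount σ) * f (dcount σ) (lastval σ) := by
    rw [hbrkset]
    rw [Finset.sum_congr rfl (fun p hp => ?_), Finset.sum_const, card_brk, smul_eq_mul]
    simp only [mem_filter, mem_univ, true_and] at hp
    rw [dcount_ins_brk σ p hp.1 hp.2, lastval_ins_ne σ p hp.1]
  have hcard2 : ((Finset.univ.filter (fun p : Fin (M+2) => (p:ℕ) ≤ M)).filter
      (fun p => ¬ brk σ p)).card = M + 1 - dcount σ := by
    have h := Finset.card_filter_add_card_filter_not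
      (s := Finset.univ.filter (fun p : Fin (M+2) => (p:ℕ) ≤ M)) (p := fun p => brk σ p)
    rw [hbrkset, card_brk, card_le_M] at h
    omega
  have hsum2 : ∑ p ∈ (Finset.univ.filter (fun p : Fin (M+2) => (p:ℕ) ≤ M)).filter
      (fun p => ¬ brk σ p), f (dcount (ins σ p)) (lastval (ins σ p)) =
      (M + 1 - dcount σ) * f (dcount σ + 1) (lastval σ) := by
    rw [Finset.sum_congr rfl (fun p hp => ?_), Finset.sum_const, hcard2, smul_eq_mul]
    simp only [mem_filter, mem_univ, true_and] at hp
    rw [dcount_ins_nobrk σ p hp.1 hp.2, lastval_ins_ne σ p hp.1]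
  rw [hsum1, hsum2]
  exact (add_assoc _ _ _).symm

lemma ins_bijective {N : ℕ} :
    Function.Bijective (fun x : Equiv.Perm (Fin N) × Fin (N+1) => ins x.1 x.2) := by
  rw [Fintype.bijective_iff_injective_and_card]
  constructor
  · rintro ⟨σ, p⟩ ⟨σ', p'⟩ h
    simp only at h
    have hp : p = p' := by
      have h1 : ins σ p p = Fin.last N := ins_apply_self σ p
      have h2 : ins σ' p' p' = Fin.last N := ins_apply_self σ' p'
      have : ins σ p p' = Fin.last N := by rw [h]; exact h2
      exact (ins σ p).injective (by rw [h1, this])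
    subst hp
    have hσ : σ = σ' := by
      apply Equiv.ext
      intro j
      have h1 := ins_apply_succAbove σ p j
      have h2 := ins_apply_succAbove σ' p j
      rw [h] at h1
      have := h1.symm.trans h2
      exact Fin.castSucc_injective _ this
    rw [hσ]
  · rw [Fintype.card_prod, Fintype.card_perm, Fintype.card_perm, Fintype.card_fin,
      Fintype.card_fin, Nat.factorial_succ, Nat.mul_comm]

lemma sum_perm_eq {N : ℕ} (g : Equiv.Perm (Fin (N+1)) → ℕ) :
    ∑ π : Equiv.Perm (Fin (N+1)), g π =
      ∑ σ : Equiv.Perm (Fin N), ∑ p : Fin (N+1), g (ins σ p) := by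
  rw [← Fintype.sum_bijective _ (ins_bijective (N := N)) _ g (fun x => rfl)]
  rw [Fintype.sum_prod_type]

def EE (M d : ℕ) : ℕ :=
  (Finset.univ.filter (fun π : Equiv.Perm (Fin (M+1)) => dcount π = d)).card

def SS (M d : ℕ) : ℕ :=
  ∑ π ∈ Finset.univ.filter (fun π : Equiv.Perm (Fin (M+1)) => dcount π = d), lastval π

lemma EE_eq_sum (M d : ℕ) : EE M d =
    ∑ π : Equiv.Perm (Fin (M+1)), (if dcount π = d then 1 else 0) := by
  rw [EE, Finset.card_filter]

lemma SS_eq_sum (M d : ℕ) : SS M d =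
    ∑ π : Equiv.Perm (Fin (M+1)), (if dcount π = d then lastval π else 0) := by
  rw [SS, Finset.sum_filter]

lemma EE_zero_of_gt {M d : ℕ} (h : M < d) : EE M d = 0 := by
  rw [EE, Finset.card_eq_zero]
  ext π
  simp only [mem_filter, mem_univ, true_and, Finset.notMem_empty, iff_false]
  intro hd
  have : dcount π ≤ M := by
    rw [dcount]
    exact le_trans (Finset.card_filter_le _ _) (by simp)
  omega

lemma EE_rec_zero (M : ℕ) : EE (M+1) 0 = EE M 0 := by
  have key : ∀ σ : Equiv.Perm (Fin (M+1)),
      (∑ p : Fin (M+2), (if dcount (ins σ p) = 0 then 1 else 0)) =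
      (if dcount σ = 0 then 1 else 0) := by
    intro σ
    rw [sum_ins_f σ (fun a _ => if a = 0 then 1 else 0)]
    by_cases h1 : dcount σ = 0 <;> simp [h1]
  rw [EE_eq_sum, sum_perm_eq, Finset.sum_congr rfl (fun σ _ => key σ), ← EE_eq_sum]

lemma EE_rec_succ (M e : ℕ) : EE (M+1) (e+1) = (e+2) * EE M (e+1) + (M+1-e) * EE M e := by
  have key : ∀ σ : Equiv.Perm (Fin (M+1)),
      (∑ p : Fin (M+2), (if dcount (ins σ p) = e+1 then 1 else 0)) =
      (e+2) * (if dcount σ = e+1 then 1 else 0) + (M+1-e) * (if dcount σ = e then 1 else 0) := by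
    intro σ
    rw [sum_ins_f σ (fun a _ => if a = e+1 then 1 else 0)]
    by_cases h1 : dcount σ = e+1 <;> by_cases h2 : dcount σ = e <;>
      simp [h1, h2] <;> omega
  rw [EE_eq_sum, sum_perm_eq, Finset.sum_congr rfl (fun σ _ => key σ),
    Finset.sum_add_distrib, ← Finset.mul_sum, ← Finset.mul_sum, ← EE_eq_sum, ← EE_eq_sum]

lemma SS_rec_zero (M : ℕ) : SS (M+1) 0 = (M+2) * EE M 0 := by
  have key : ∀ σ : Equiv.Perm (Fin (M+1)),
      (∑ p : Fin (M+2), (if dcount (ins σ p) = 0 then lastval (ins σ p) else 0)) =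
      (M+2) * (if dcount σ = 0 then 1 else 0) := by
    intro σ
    rw [sum_ins_f σ (fun a v => if a = 0 then v else 0)]
    by_cases h1 : dcount σ = 0 <;> simp [h1]
  rw [SS_eq_sum, sum_perm_eq, Finset.sum_congr rfl (fun σ _ => key σ),
    ← Finset.mul_sum, ← EE_eq_sum]

lemma SS_rec_succ (M e : ℕ) : SS (M+1) (e+1) =
    (M+2) * EE M (e+1) + (e+1) * SS M (e+1) + (M+1-e) * SS M e := by
  have key : ∀ σ : Equiv.Perm (Fin (M+1)),
      (∑ p : Fin (M+2), (if dcount (ins σ p) = e+1 then lastval (ins σ p) else 0)) =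
      (M+2) * (if dcount σ = e+1 then 1 else 0) +
        (e+1) * (if dcount σ = e+1 then lastval σ else 0) +
        (M+1-e) * (if dcount σ = e then lastval σ else 0) := by
    intro σ
    rw [sum_ins_f σ (fun a v => if a = e+1 then v else 0)]
    by_cases h1 : dcount σ = e+1 <;> by_cases h2 : dcount σ = e <;>
      simp [h1, h2] <;> ring
  rw [SS_eq_sum, sum_perm_eq, Finset.sum_congr rfl (fun σ _ => key σ),
    Finset.sum_add_distrib, Finset.sum_add_distrib,
    ← Finset.mul_sum, ← Finset.mul_sum, ← Finset.mul_sum, ← EE_eq_sum, ← SS_eq_sum, ← SS_eq_sum]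

lemma SS_zero_of_gt {M d : ℕ} (h : M < d) : SS M d = 0 := by
  rw [SS]
  apply Finset.sum_eq_zero
  intro π hπ
  exfalso
  simp only [mem_filter, mem_univ, true_and] at hπ
  have : dcount π ≤ M := by
    rw [dcount]
    exact le_trans (Finset.card_filter_le _ _) (by simp)
  omega

theorem SS_eq : ∀ M d : ℕ, SS M d = (M + 1 - d) * EE M d := by
  intro M
  induction M with
  | zero =>
    intro d
    match d with
    | 0 =>
      have h1 : (Finset.univ.filter (fun π : Equiv.Perm (Fin 1) => dcount π = 0)) =
          Finset.univ := by
        ext π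
        simp only [mem_filter, mem_univ, true_and, iff_true]
        rw [dcount]
        simp
      rw [SS, EE, h1]
      have h2 : ∀ π : Equiv.Perm (Fin 1), lastval π = 1 := by
        intro π
        rw [lastval]
        have : π (Fin.last 0) = Fin.last 0 := Subsingleton.elim _ _
        rw [this]
        simp
      rw [Finset.sum_congr rfl (fun π _ => h2 π), Finset.sum_const, smul_eq_mul]
      omega
    | (e+1) =>
      rw [SS_zero_of_gt (by omega), EE_zero_of_gt (by omega), mul_zero]
  | succ M ih =>
    intro d
    match d with
    | 0 =>
      rw [SS_rec_zero, EE_rec_zero]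
      norm_num
    | (e+1) =>
      rw [SS_rec_succ, EE_rec_succ, ih (e+1), ih e]
      by_cases he : e ≤ M
      · obtain ⟨a, rfl⟩ : ∃ a, M = e + a := ⟨M - e, by omega⟩
        have h1 : e + a + 1 - e = a + 1 := by omega
        have h2 : e + a + 1 - (e + 1) = a := by omega
        have h3 : e + a + 1 + 1 - (e + 1) = a + 1 := by omega
        rw [h1, h2, h3]
        ring
      · have h1 : EE M (e+1) = 0 := EE_zero_of_gt (by omega)
        have h2 : EE M e = 0 := EE_zero_of_gt (by omega)
        rw [h1, h2]
        simp

lemma descents_eq_dcount {M : ℕ} (π : Equiv.Perm (Fin (M+1))) :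
    descents (M+1) π = dcount π := by
  classical
  rw [descents, dcount]
  symm
  apply Finset.card_bij (fun (j : Fin M) _ => j.castSucc)
  · intro j hj
    simp only [mem_filter, mem_univ, true_and] at hj ⊢
    exact ⟨j.succ, by simp, hj⟩
  · intro a _ b _ hab
    exact Fin.castSucc_injective _ hab
  · intro i hi
    simp only [mem_filter, mem_univ, true_and] at hi
    obtain ⟨j', hj', hlt⟩ := hi
    have hj'lt := j'.isLt
    have him : (i:ℕ) < M := by omega
    refine ⟨⟨(i:ℕ), him⟩, ?_, by ext; simp⟩
    simp only [mem_filter, mem_univ, true_and]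
    have g1 : π (⟨(i:ℕ), him⟩ : Fin M).succ = π j' := perm_congr π (by simp [hj'])
    have g2 : π (⟨(i:ℕ), him⟩ : Fin M).castSucc = π i := perm_congr π (by simp)
    rw [g1, g2]
    exact hlt

lemma Eul_eq_EE (M d : ℕ) : Eul (M+1) (d : ℤ) = EE M d := by
  rw [Eul, EE]
  congr 1
  apply Finset.filter_congr
  intro π _
  rw [descents_eq_dcount]
  constructor
  · intro h; exact_mod_cast h
  · intro h; exact_mod_cast h

lemma Alast_eq (M d k : ℕ) : Alast (M+1) (d : ℤ) k =
    (Finset.univ.filter (fun π : Equiv.Perm (Fin (M+1)) =>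
      dcount π = d ∧ lastval π = k)).card := by
  rw [Alast]
  congr 1
  apply Finset.filter_congr
  intro π _
  rw [descents_eq_dcount]
  constructor
  · rintro ⟨h1, i, hi, hk⟩
    refine ⟨by exact_mod_cast h1, ?_⟩
    have : i = Fin.last M := by ext; simp; omega
    rw [lastval, ← this, hk]
  · rintro ⟨h1, h2⟩
    exact ⟨by exact_mod_cast h1, Fin.last M, by simp, h2⟩

lemma sum_Alast (M d : ℕ) :
    ∑ k ∈ Finset.Icc 1 (M+1), k * Alast (M+1) (d : ℤ) k = SS M d := by
  classical
  rw [SS]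
  rw [← Finset.sum_fiberwise_of_maps_to (g := fun π => lastval π)
    (t := Finset.Icc 1 (M+1)) (fun π _ => ?_) lastval]
  · apply Finset.sum_congr rfl
    intro k hk
    rw [Alast_eq]
    have : (Finset.univ.filter (fun π : Equiv.Perm (Fin (M+1)) =>
        dcount π = d ∧ lastval π = k)) =
        (Finset.univ.filter (fun π : Equiv.Perm (Fin (M+1)) => dcount π = d)).filter
          (fun π => lastval π = k) := by
      rw [Finset.filter_filter]
    rw [this]
    rw [Finset.sum_congr rfl (fun π hπ => ?_), Finset.sum_const, smul_eq_mul, mul_comm]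
    simp only [mem_filter] at hπ
    exact hπ.2
  · simp only [Finset.mem_Icc, lastval]
    have := (π (Fin.last M)).isLt
    omega

end EulerianDev

theorem stmt8 (n : ℕ) (hn : 1 ≤ n) (d : ℕ) (hd : d ≤ n - 1) :
    ∑ k ∈ Finset.Icc 1 n, k * Alast n (d : ℤ) k = (n - d) * Eul n (d : ℤ) := by
  match n, hn with
  | (M+1), _ =>
    rw [sum_Alast, Eul_eq_EE, SS_eq]
end
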